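/- arXiv:2206.14023 — 3 statements merged into one kernel-verified Lean document; each statement's English description precedes it below -/
import Mathlib

section
/- Let k ≥ 2 and let λ be a partition with λ_1 < k. Identify the conjugate λᶜ with the (k-1)-tuple (λᶜ_1,...,λᶜ_{k-1}) (padding with zeros), and define γ_i ∈ {1,...,k} by γ_i ≡ λᶜ_i - i (mod k). Then the entries γ_1, ..., γ_{k-1} are pairwise distinct if and only if the k-core of λ has at most one part. -/
open scoped Classical

namespace Petrie

/-- An integer partition, encoded as a weakly decreasing, eventually zero
function `ℕ → ℕ` (0-indexed parts: `parts i` is the `(i+1)`-st part). -/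
structure Partition where
  parts : ℕ → ℕ
  antitone : ∀ ⦃i j : ℕ⦄, i ≤ j → parts j ≤ parts i
  fin_supp : ∃ N, ∀ i, N ≤ i → parts i = 0

/-- The size `|λ|` of a partition. -/
noncomputable def psize (l : Partition) : ℕ := ∑ᶠ i, l.parts i

/-- The number of (nonzero) parts of a partition. -/
noncomputable def length (l : Partition) : ℕ := sInf {i | l.parts i = 0}

/-- The partition whose parts are given by a weakly decreasing list `L`
(of its nonzero entries, possibly padded by zeros). -/
noncomputable def ofList (L : List ℕ) : Partition where
  parts := fun i => (L.drop i).foldr max 0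
  antitone := by
    have step : ∀ (M : List ℕ) (i : ℕ),
        (M.drop (i+1)).foldr max 0 ≤ (M.drop i).foldr max 0 := by
      intro M
      induction M with
      | nil => intro i; simp
      | cons a t ih =>
        intro i
        cases i with
        | zero =>
          simp only [List.drop_succ_cons, List.drop_zero, List.foldr_cons]; exact le_max_right a (t.foldr max 0)
        | succ n => simpa using ih n
    intro i j hij
    induction j, hij using Nat.le_induction with
    | base => exact le_rfl
    | succ n hn ih => exact (step L n).trans ih
  fin_supp := ⟨L.length, by intro i hi; simp [List.drop_eq_nil_of_le hi]⟩

/-- The conjugate (transpose) partition. -/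
noncomputable def conj (l : Partition) : Partition where
  parts := fun i => sInf {n | l.parts n ≤ i}
  antitone := by
    intro i j hij
    obtain ⟨N, hN⟩ := l.fin_supp
    refine csInf_le_csInf (OrderBot.bddBelow _) ⟨N, ?_⟩ ?_
    · simp [hN N le_rfl]
    · intro n hn
      exact le_trans hn hij
  fin_supp := by
    refine ⟨l.parts 0, fun i hi => ?_⟩
    exact Nat.sInf_eq_zero.mpr (Or.inl (le_trans (l.antitone (Nat.zero_le 0)) hi))

/-- The `k`-Petrie number `pet_k(λ) = det[χ(0 ≤ λ_i - i + j < k)]_{i,j=1}^{ℓ(λ)}`. -/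
noncomputable def pet (k : ℕ) (l : Partition) : ℤ :=
  Matrix.det (Matrix.of fun i j : Fin (length l) =>
    if (0:ℤ) ≤ (l.parts i : ℤ) - (i:ℕ) + (j:ℕ) ∧ (l.parts i : ℤ) - (i:ℕ) + (j:ℕ) < k
    then 1 else 0)

/-- The cells of the skew diagram `λ/μ` (rows and columns 0-indexed). -/
def cells (la mu : Partition) : Set (ℕ × ℕ) :=
  {c | mu.parts c.1 ≤ c.2 ∧ c.2 < la.parts c.1}

/-- Rookwise adjacency of two cells. -/
def Adj (c d : ℕ × ℕ) : Prop :=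
  (c.1 = d.1 ∧ (c.2 + 1 = d.2 ∨ d.2 + 1 = c.2)) ∨
  (c.2 = d.2 ∧ (c.1 + 1 = d.1 ∨ d.1 + 1 = c.1))

/-- `λ/μ` is a rim hook (border strip) of size `k`: `μ ⊆ λ`, the skew diagram
has `k` cells, is rookwise connected, and contains no 2×2 square. -/
def IsRimHook (la mu : Partition) (k : ℕ) : Prop :=
  (∀ i, mu.parts i ≤ la.parts i) ∧
  (∑ᶠ i, (la.parts i - mu.parts i)) = k ∧
  (∀ c ∈ cells la mu, ∀ d ∈ cells la mu,
    Relation.ReflTransGen (fun a b => a ∈ cells la mu ∧ b ∈ cells la mu ∧ Adj a b) c d) ∧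
  ¬ ∃ i j : ℕ, (i, j) ∈ cells la mu ∧ (i+1, j) ∈ cells la mu ∧
      (i, j+1) ∈ cells la mu ∧ (i+1, j+1) ∈ cells la mu

/-- The height of a skew shape `λ/μ`: one less than its number of rows. -/
noncomputable def height (la mu : Partition) : ℕ :=
  Set.ncard {i | mu.parts i < la.parts i} - 1

/-- The number of columns of the skew diagram `λ/μ`. -/
noncomputable def cols (la mu : Partition) : ℕ :=
  Set.ncard {j | ∃ i, (i, j) ∈ cells la mu}

/-- `c` is the `k`-core of `λ`: it is obtained from `λ` by successively removing
rim hooks of size `k`, and no further rim hook of size `k` can be removed. -/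
def IsCore (k : ℕ) (la c : Partition) : Prop :=
  Relation.ReflTransGen (fun a b => IsRimHook a b k) la c ∧ ∀ b, ¬ IsRimHook c b k

/-- Dominance order: `Dominates μ λ` means `λ ⊴ μ`. -/
def Dominates (mu la : Partition) : Prop :=
  ∀ r, ∑ i ∈ Finset.range r, la.parts i ≤ ∑ i ∈ Finset.range r, mu.parts i

/-! ### Symmetric functions, realized as formal power series in countably
many variables `x_0, x_1, x_2, …`. -/

/-- The ring of formal power series in the variables `x_i`, `i : ℕ`. -/
abbrev SymFn := MvPowerSeries ℕ ℤ

/-- The total degree of an exponent vector. -/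
noncomputable def degree (d : ℕ →₀ ℕ) : ℕ := d.sum fun _ e => e

/-- The complete homogeneous symmetric function `h_m`. -/
noncomputable def hfun (m : ℕ) : SymFn := fun d => if degree d = m then 1 else 0

/-- `h_n` for an integer index (`0` for negative `n`). -/
noncomputable def hz (n : ℤ) : SymFn := if 0 ≤ n then hfun n.toNat else 0

/-- The elementary symmetric function `e_m`. -/
noncomputable def esymmF (m : ℕ) : SymFn :=
  fun d => if degree d = m ∧ ∀ i, d i ≤ 1 then 1 else 0

/-- The power sum symmetric function `p_n = Σ_i x_i^n`. -/
noncomputable def psumF (n : ℕ) : SymFn :=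
  fun d => if ∃ i, d = Finsupp.single i n then 1 else 0

/-- The Petrie symmetric function `G(k,m)`, i.e. the degree-`m` part of
`Π_i (1 + x_i + x_i^2 + ⋯ + x_i^{k-1})`. -/
noncomputable def G (k m : ℕ) : SymFn :=
  fun d => if degree d = m ∧ ∀ i, d i < k then 1 else 0

/-- The monomial symmetric function `m_λ`. -/
noncomputable def msym (l : Partition) : SymFn :=
  fun d => if Multiset.map (fun i => d i) d.support.val =
      Multiset.map l.parts (Multiset.range (length l)) then 1 else 0

/-- The Schur function `s_λ`, via the Jacobi–Trudi determinant
`s_λ = det[h_{λ_i - i + j}]_{i,j=1}^{ℓ(λ)}`. -/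
noncomputable def schur (l : Partition) : SymFn :=
  Matrix.det (Matrix.of fun i j : Fin (length l) =>
    hz ((l.parts i : ℤ) - (i:ℕ) + (j:ℕ)))

/-- The representative in `{1, …, k}` of `x` modulo `k`. -/
noncomputable def resid (k : ℕ) (x : ℤ) : ℤ := if x % (k:ℤ) = 0 then (k:ℤ) else x % (k:ℤ)

/-- `β_i = λᶜ_i - i` (1-indexed `i`). -/
noncomputable def betaSeq (l : Partition) (i : ℕ) : ℤ := ((conj l).parts (i-1) : ℤ) - (i:ℤ)

/-- `γ_i ∈ {1, …, k}`, `γ_i ≡ λᶜ_i - i (mod k)` (1-indexed `i`). -/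
noncomputable def gammaSeq (k : ℕ) (l : Partition) (i : ℕ) : ℤ := resid k (betaSeq l i)

/-- The number of non-inversions of the sequence `γ_1, …, γ_{k-1}`. -/
noncomputable def ninv (k : ℕ) (g : ℕ → ℤ) : ℕ :=
  (((Finset.Icc 1 (k-1)) ×ˢ (Finset.Icc 1 (k-1))).filter
    (fun p => p.1 < p.2 ∧ g p.1 < g p.2)).card


/-! ### Auxiliary lemmas -/

section Aux

theorem conj_parts_le_iff (l : Partition) (i j : ℕ) :
    (conj l).parts j ≤ i ↔ l.parts i ≤ j := by
  obtain ⟨N, hN⟩ := l.fin_supp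
  have hne : {n | l.parts n ≤ j}.Nonempty := ⟨N, by simp [hN N le_rfl]⟩
  constructor
  · intro h
    have hm := Nat.sInf_mem hne
    exact le_trans (l.antitone h) hm
  · intro h
    exact Nat.sInf_le h

theorem lt_conj_parts_iff (l : Partition) (i j : ℕ) :
    i < (conj l).parts j ↔ j < l.parts i := by
  rw [← not_le, ← not_le, not_iff_not, conj_parts_le_iff]

theorem Partition.ext' {a b : Partition} (h : ∀ i, a.parts i = b.parts i) : a = b := by
  cases a; cases b
  simp only [Partition.mk.injEq]
  exact funext h

theorem conj_conj (l : Partition) : conj (conj l) = l := by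
  refine Partition.ext' fun j => ?_
  have key : ∀ i, i < (conj (conj l)).parts j ↔ i < l.parts j := by
    intro i
    rw [lt_conj_parts_iff, lt_conj_parts_iff]
  by_contra hne
  rcases Nat.lt_or_ge ((conj (conj l)).parts j) (l.parts j) with h | h
  · exact absurd ((key _).mpr h) (lt_irrefl _)
  · rcases Nat.lt_or_ge (l.parts j) ((conj (conj l)).parts j) with h2 | h2
    · exact absurd ((key _).mp h2) (lt_irrefl _)
    · exact hne (le_antisymm h2 h)

theorem conj_mono {a b : Partition} (h : ∀ i, b.parts i ≤ a.parts i) (j : ℕ) :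
    (conj b).parts j ≤ (conj a).parts j := by
  rw [conj_parts_le_iff]
  obtain ⟨N, hN⟩ := a.fin_supp
  have hne : {n | a.parts n ≤ j}.Nonempty := ⟨N, by simp [hN N le_rfl]⟩
  have := Nat.sInf_mem hne
  exact le_trans (h _) this

theorem conj_parts_eq_zero {l : Partition} {j : ℕ} (h : l.parts 0 ≤ j) :
    (conj l).parts j = 0 := by
  have := conj_parts_le_iff l 0 j
  omega

theorem length_eq_conj_parts (c : Partition) : length c = (conj c).parts 0 := by
  unfold length conj
  congr 1
  ext n
  simp [Nat.le_zero]

theorem mem_cells_conj {a b : Partition} (p : ℕ × ℕ) :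
    p ∈ cells (conj a) (conj b) ↔ p.swap ∈ cells a b := by
  obtain ⟨i, j⟩ := p
  simp only [cells, Set.mem_setOf_eq, Prod.swap_prod_mk]
  rw [conj_parts_le_iff, lt_conj_parts_iff]

theorem cells_conj_eq (a b : Partition) :
    cells (conj a) (conj b) = Prod.swap '' cells a b := by
  ext p
  rw [mem_cells_conj]
  constructor
  · intro h
    exact ⟨p.swap, h, Prod.swap_swap p⟩
  · rintro ⟨q, hq, rfl⟩
    rwa [Prod.swap_swap]

theorem adj_swap {x y : ℕ × ℕ} (h : Adj x y) : Adj x.swap y.swap := by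
  unfold Adj at h ⊢
  simp only [Prod.fst_swap, Prod.snd_swap]
  tauto

theorem adj_symm : Symmetric Adj := by
  intro x y h
  unfold Adj at h ⊢
  omega

theorem cells_card (a b : Partition) :
    (cells a b).ncard = ∑ᶠ i, (a.parts i - b.parts i) := by
  obtain ⟨N, hN⟩ := a.fin_supp
  have hset : cells a b = ↑((Finset.range N).biUnion
      (fun i => {i} ×ˢ Finset.Ico (b.parts i) (a.parts i))) := by
    ext ⟨i, j⟩
    simp only [cells, Set.mem_setOf_eq, Finset.coe_biUnion, Finset.mem_coe,
      Finset.mem_biUnion, Finset.mem_range, Finset.mem_product, Finset.mem_singleton,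
      Finset.mem_Ico, Set.mem_iUnion]
    constructor
    · rintro ⟨h1, h2⟩
      refine ⟨i, ?_, rfl, h1, h2⟩
      by_contra hiN
      have := hN i (by omega)
      omega
    · rintro ⟨i', _, rfl, h1, h2⟩
      exact ⟨h1, h2⟩
  rw [hset, Set.ncard_coe_finset]
  rw [Finset.card_biUnion]
  · have : ∑ᶠ i, (a.parts i - b.parts i) = ∑ i ∈ Finset.range N, (a.parts i - b.parts i) := by
      apply finsum_eq_sum_of_support_subset
      intro i hi
      simp only [Function.mem_support] at hi
      simp only [Finset.coe_range, Set.mem_Iio]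
      by_contra hiN
      have := hN i (by omega)
      omega
    rw [this]
    apply Finset.sum_congr rfl
    intro i _
    rw [Finset.card_product, Finset.card_singleton, Nat.card_Ico, one_mul]
  · intro x _ y _ hxy
    rw [Function.onFun, Finset.disjoint_left]
    rintro ⟨i, j⟩ hx hy
    simp only [Finset.mem_product, Finset.mem_singleton] at hx hy
    exact hxy (hx.1.symm.trans hy.1)

theorem finsum_conj_sub (a b : Partition) :
    ∑ᶠ i, ((conj a).parts i - (conj b).parts i) = ∑ᶠ i, (a.parts i - b.parts i) := by
  rw [← cells_card, ← cells_card, cells_conj_eq,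
    Set.ncard_image_of_injective _ Prod.swap_injective]

theorem isRimHook_conj {a b : Partition} {k : ℕ} (h : IsRimHook a b k) :
    IsRimHook (conj a) (conj b) k := by
  obtain ⟨hsub, hsum, hconn, h2⟩ := h
  refine ⟨fun i => conj_mono hsub i, by rw [finsum_conj_sub]; exact hsum, ?_, ?_⟩
  · intro c hcm d hdm
    have path := hconn c.swap ((mem_cells_conj c).mp hcm) d.swap ((mem_cells_conj d).mp hdm)
    have lifted := Relation.ReflTransGen.lift (r := fun x y =>
        x ∈ cells a b ∧ y ∈ cells a b ∧ Adj x y)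
      (p := fun x y => x ∈ cells (conj a) (conj b) ∧ y ∈ cells (conj a) (conj b) ∧ Adj x y)
      Prod.swap
      (fun x y hxy => by
        obtain ⟨hx, hy, hadj⟩ := hxy
        exact ⟨(mem_cells_conj x.swap).mpr (by rwa [Prod.swap_swap]),
          (mem_cells_conj y.swap).mpr (by rwa [Prod.swap_swap]), adj_swap hadj⟩) _ _ path
    simpa [Prod.swap_swap, Function.onFun] using lifted
  · rintro ⟨i, j, h1, h2', h3, h4⟩
    exact h2 ⟨j, i, (mem_cells_conj _).mp h1, (mem_cells_conj _).mp h3,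
      (mem_cells_conj _).mp h2', (mem_cells_conj _).mp h4⟩


theorem telescope (A B : ℕ → ℤ) (r s : ℕ) (hs : r ≤ s)
    (hB : ∀ i, r ≤ i → i < s → B i = A (i+1) - 1) :
    ∑ i ∈ Finset.Icc r s, (A i - B i) = A r - B s + ((s : ℤ) - r) := by
  induction s, hs using Nat.le_induction with
  | base => simp
  | succ n hn ih =>
    rw [Finset.sum_Icc_succ_top (by omega)]
    rw [ih (fun i h1 h2 => hB i h1 (by omega))]
    rw [hB n hn (by omega)]
    push_cast
    ring

theorem path_rows {a b : Partition} {x y : ℕ × ℕ}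
    (h : Relation.ReflTransGen (fun u v => u ∈ cells a b ∧ v ∈ cells a b ∧ Adj u v) x y)
    (hx : x ∈ cells a b) :
    ∀ m : ℕ, (x.1 ≤ m ∧ m ≤ y.1) ∨ (y.1 ≤ m ∧ m ≤ x.1) → ∃ j, (m, j) ∈ cells a b := by
  induction h with
  | refl =>
    intro m hm
    have hmx : m = x.1 := by omega
    exact ⟨x.2, by rw [hmx, Prod.mk.eta]; exact hx⟩
  | @tail p q hxp hpq ih =>
    intro m hm
    obtain ⟨hpc, hqc, hadj⟩ := hpq
    have hrow : q.1 = p.1 ∨ q.1 = p.1 + 1 ∨ p.1 = q.1 + 1 := by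
      unfold Adj at hadj; omega
    by_cases hmid : (x.1 ≤ m ∧ m ≤ p.1) ∨ (p.1 ≤ m ∧ m ≤ x.1)
    · exact ih m hmid
    · have : m = p.1 ∨ m = q.1 := by omega
      rcases this with hm' | hm'
      · exact ⟨p.2, by rw [hm', Prod.mk.eta]; exact hpc⟩
      · exact ⟨q.2, by rw [hm', Prod.mk.eta]; exact hqc⟩

theorem path_vert {a b : Partition} {x y : ℕ × ℕ} {i : ℕ}
    (h : Relation.ReflTransGen (fun u v => u ∈ cells a b ∧ v ∈ cells a b ∧ Adj u v) x y)
    (hx : x.1 ≤ i) (hy : i + 1 ≤ y.1) :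
    ∃ j, (i, j) ∈ cells a b ∧ (i+1, j) ∈ cells a b := by
  have key : y.1 ≤ i ∨ ∃ j, (i, j) ∈ cells a b ∧ (i+1, j) ∈ cells a b := by
    clear hy
    induction h with
    | refl => exact Or.inl hx
    | @tail p q hxp hpq ih =>
      rcases ih with hple | hfound
      · obtain ⟨hpc, hqc, hadj⟩ := hpq
        by_cases hq : q.1 ≤ i
        · exact Or.inl hq
        · push_neg at hq
          unfold Adj at hadj
          have h1 : q.1 = p.1 + 1 ∧ p.1 = i ∧ q.2 = p.2 := by omega
          refine Or.inr ⟨p.2, ?_, ?_⟩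
          · rw [← h1.2.1, Prod.mk.eta]; exact hpc
          · have : (i+1, p.2) = q := by
              have := h1.2.2
              obtain ⟨q1, q2⟩ := q
              simp at this ⊢
              omega
            rw [this]; exact hqc
      · exact Or.inr hfound
  rcases key with h' | h'
  · omega
  · exact h'

theorem rimhook_struct {a b : Partition} {k : ℕ} (hk : 0 < k) (h : IsRimHook a b k) :
    ∃ r s : ℕ, r ≤ s ∧
      (∀ i, i < r ∨ s < i → b.parts i = a.parts i) ∧
      (∀ i, r ≤ i → i ≤ s → b.parts i < a.parts i) ∧
      (∀ i, r ≤ i → i < s → b.parts i = a.parts (i+1) - 1 ∧ 1 ≤ a.parts (i+1)) ∧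
      ((b.parts s : ℤ) = (a.parts r : ℤ) + ((s : ℤ) - r) - k) := by
  obtain ⟨hsub, hsum, hconn, h2⟩ := h
  set Rows : Set ℕ := {i | b.parts i < a.parts i} with hR
  obtain ⟨N, hN⟩ := a.fin_supp
  have hbdd : ∀ i ∈ Rows, i < N := by
    intro i hi
    by_contra hcon
    have := hN i (by omega)
    have : b.parts i < a.parts i := hi
    omega
  have hnonempty : Rows.Nonempty := by
    by_contra he
    rw [Set.not_nonempty_iff_eq_empty] at he
    have hz : (fun i => a.parts i - b.parts i) = fun _ => 0 := by
      funext i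
      have : i ∉ Rows := by rw [he]; exact Set.notMem_empty i
      have hia : ¬ (b.parts i < a.parts i) := this
      omega
    rw [hz] at hsum
    rw [finsum_zero] at hsum
    omega
  have hBdd : BddAbove Rows := ⟨N, fun i hi => (hbdd i hi).le⟩
  set r := sInf Rows with hrdef
  set s := sSup Rows with hsdef
  have hrR : r ∈ Rows := Nat.sInf_mem hnonempty
  have hsR : s ∈ Rows := Nat.sSup_mem hnonempty hBdd
  have hrs : r ≤ s := Nat.sInf_le hsR
  have hcell : ∀ i ∈ Rows, (i, b.parts i) ∈ cells a b := fun i hi => ⟨le_rfl, hi⟩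
  have hconvex : ∀ m, r ≤ m → m ≤ s → m ∈ Rows := by
    intro m h1 h2
    have path := hconn _ (hcell r hrR) _ (hcell s hsR)
    obtain ⟨j, hj⟩ := path_rows path (hcell r hrR) m (Or.inl ⟨h1, h2⟩)
    exact lt_of_le_of_lt hj.1 hj.2
  have hout : ∀ i, i < r ∨ s < i → b.parts i = a.parts i := by
    intro i hi
    have hnm : i ∉ Rows := by
      intro hmem
      have := Nat.sInf_le hmem
      have := le_csSup hBdd hmem
      omega
    have h1 : ¬ (b.parts i < a.parts i) := hnm
    have := hsub i
    omega
  have hmid : ∀ i, r ≤ i → i < s → b.parts i = a.parts (i+1) - 1 ∧ 1 ≤ a.parts (i+1) := by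
    intro i hi1 hi2
    have hiR : i ∈ Rows := hconvex i hi1 (by omega)
    have hi1R : i+1 ∈ Rows := hconvex (i+1) (by omega) (by omega)
    obtain ⟨j, hj1, hj2⟩ := path_vert
      (hconn _ (hcell i hiR) _ (hcell (i+1) hi1R)) (le_refl i) (le_refl (i+1))
    have hlow : b.parts i < a.parts (i+1) := lt_of_le_of_lt hj1.1 hj2.2
    have hup : a.parts (i+1) ≤ b.parts i + 1 := by
      by_contra hcon
      push_neg at hcon
      have hmono_a := a.antitone (show i ≤ i + 1 by omega)
      have hmono_b := b.antitone (show i ≤ i + 1 by omega)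
      have hiRlt : b.parts i < a.parts i := hiR
      exact h2 ⟨i, b.parts i,
        ⟨show b.parts i ≤ b.parts i by omega, show b.parts i < a.parts i by omega⟩,
        ⟨show b.parts (i+1) ≤ b.parts i by omega, show b.parts i < a.parts (i+1) by omega⟩,
        ⟨show b.parts i ≤ b.parts i + 1 by omega, show b.parts i + 1 < a.parts i by omega⟩,
        ⟨show b.parts (i+1) ≤ b.parts i + 1 by omega,
         show b.parts i + 1 < a.parts (i+1) by omega⟩⟩
    constructor <;> omega
  refine ⟨r, s, hrs, hout, fun i h1 h2 => hconvex i h1 h2, hmid, ?_⟩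
  have h1 : ∑ᶠ i, (a.parts i - b.parts i) = ∑ i ∈ Finset.Icc r s, (a.parts i - b.parts i) := by
    apply finsum_eq_sum_of_support_subset
    intro i hi
    simp only [Function.mem_support] at hi
    have hiR : i ∈ Rows := by
      have := hsub i
      have : b.parts i < a.parts i := by omega
      exact this
    simp only [Finset.coe_Icc, Set.mem_Icc]
    exact ⟨Nat.sInf_le hiR, le_csSup hBdd hiR⟩
  have h2' : ((k : ℤ)) = ∑ i ∈ Finset.Icc r s, ((a.parts i : ℤ) - b.parts i) := by
    rw [← hsum, h1, Nat.cast_sum]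
    apply Finset.sum_congr rfl
    intro i _
    exact Nat.cast_sub (hsub i)
  have h3 := telescope (fun i => (a.parts i : ℤ)) (fun i => (b.parts i : ℤ)) r s hrs
    (fun i hi1 hi2 => by
      have hm := hmid i hi1 hi2
      have h4 := hm.1
      have h5 := hm.2
      omega)
  have h4 : ((k:ℤ)) = (a.parts r : ℤ) - (b.parts s : ℤ) + ((s:ℤ) - r) := by
    rw [h2']
    exact h3
  omega



noncomputable def gres (k : ℕ) (m : Partition) (i : ℕ) : ℤ :=
  (((conj m).parts i : ℤ) - ((i : ℤ) + 1)) % (k : ℤ)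

theorem gm_step {k : ℕ} (hk : 2 ≤ k) {a b : Partition}
    (hvan : ∀ j, k - 1 ≤ j → (conj a).parts j = 0)
    (h : IsRimHook a b k) :
    Multiset.map (gres k b) (Finset.range (k-1)).val
      = Multiset.map (gres k a) (Finset.range (k-1)).val := by
  obtain ⟨r, s, hrs, hout, hin, hmid, hsum⟩ := rimhook_struct (by omega) (isRimHook_conj h)
  have hs : s < k - 1 := by
    by_contra hcon
    have hv := hvan s (by omega)
    have hi := hin s hrs le_rfl
    omega
  set σ : ℕ → ℕ := fun i => if i < r then i else if i < s then i + 1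
    else if i = s then r else i with hσ
  have hmap : ∀ i < k-1, gres k b i = gres k a (σ i) := by
    intro i hi
    by_cases h1 : i < r
    · simp only [hσ, if_pos h1, gres, hout i (Or.inl h1)]
    · by_cases hlt : i < s
      · have hm := hmid i (by omega) hlt
        simp only [hσ, if_neg h1, if_pos hlt, gres]
        congr 1
        have e1 := hm.1
        have e2 := hm.2
        push_cast
        omega
      · by_cases h3 : i = s
        · subst h3
          have hσi : σ i = r := by
            simp only [hσ]
            split_ifs <;> omega
          rw [hσi]
          simp only [gres]
          have he : ((conj b).parts i : ℤ) - ((i : ℤ)+1)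
              = (((conj a).parts r : ℤ) - ((r : ℤ)+1)) - k := by omega
          rw [he, Int.sub_emod, Int.emod_self, sub_zero, Int.emod_emod_of_dvd _ dvd_rfl]
        · have hσi : σ i = i := by
            simp only [hσ]
            split_ifs <;> omega
          rw [hσi]
          simp only [gres, hout i (Or.inr (by omega))]
  have hσinj : Set.InjOn σ (Finset.range (k-1)) := by
    intro i hi j hj hij
    simp only [Finset.coe_range, Set.mem_Iio] at hi hj
    simp only [hσ] at hij
    split_ifs at hij <;> omega
  have himg : Finset.image σ (Finset.range (k-1)) = Finset.range (k-1) := by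
    apply Finset.eq_of_subset_of_card_le
    · intro x hx
      rw [Finset.mem_image] at hx
      obtain ⟨i, hi, rfl⟩ := hx
      simp only [Finset.mem_range] at hi ⊢
      simp only [hσ]
      split_ifs <;> omega
    · rw [Finset.card_image_of_injOn hσinj]
  have hmap2 : Multiset.map σ (Finset.range (k-1)).val = (Finset.range (k-1)).val := by
    rw [← Finset.image_val_of_injOn hσinj, himg]
  calc Multiset.map (gres k b) (Finset.range (k-1)).val
      = Multiset.map (gres k a ∘ σ) (Finset.range (k-1)).val := by
        apply Multiset.map_congr rfl
        intro i hi
        exact hmap i (by simpa using hi)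
    _ = Multiset.map (gres k a) (Multiset.map σ (Finset.range (k-1)).val) := by
        rw [Multiset.map_map]
    _ = _ := by rw [hmap2]

theorem resid_eq_resid_iff {k : ℕ} (hk : 0 < k) (x y : ℤ) :
    resid k x = resid k y ↔ x % (k : ℤ) = y % (k : ℤ) := by
  unfold resid
  have hkz : (0:ℤ) < (k:ℤ) := by exact_mod_cast hk
  have hx := Int.emod_lt_of_pos x hkz
  have hy := Int.emod_lt_of_pos y hkz
  have hx0 := Int.emod_nonneg x (show (k:ℤ) ≠ 0 by omega)
  have hy0 := Int.emod_nonneg y (show (k:ℤ) ≠ 0 by omega)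
  split_ifs with h1 h2 h2 <;> constructor <;> intro h <;> omega



theorem exists_rimhook (k : ℕ) (hk : 2 ≤ k) (m : Partition)
    (hvan : ∀ j, k - 1 ≤ j → m.parts j = 0)
    (hm0 : 2 ≤ m.parts 0)
    (hno : ∀ j, j < k - 1 → (m.parts j : ℤ) - ((j:ℤ)+1) ≠ (m.parts 0 : ℤ) - 1 - (k:ℤ)) :
    ∃ b : Partition, IsRimHook m b k := by
  classical
  set B : ℕ → ℤ := fun j => (m.parts j : ℤ) - ((j:ℤ)+1) with hBdef
  set S : Set ℕ := {j | j < k - 1 ∧ (m.parts 0 : ℤ) - 1 - (k:ℤ) < B j} with hSdef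
  have h0S : 0 ∈ S := by
    refine ⟨by omega, ?_⟩
    show (m.parts 0 : ℤ) - 1 - (k:ℤ) < B 0
    simp only [hBdef]
    push_cast
    omega
  have hSbdd : BddAbove S := ⟨k, fun j hj => by have := hj.1; omega⟩
  set s := sSup S with hsdef
  have hsS : s ∈ S := Nat.sSup_mem ⟨0, h0S⟩ hSbdd
  obtain ⟨hs1, hs2⟩ := hsS
  have hs2' : (m.parts 0 : ℤ) - 1 - k < (m.parts s : ℤ) - ((s:ℤ)+1) := hs2
  have hnot : ∀ j, s < j → j < k - 1 →
      (m.parts j : ℤ) - ((j:ℤ)+1) < (m.parts 0:ℤ) - 1 - k := by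
    intro j hj1 hj2
    have hjS : j ∉ S := fun hmem => absurd (le_csSup hSbdd hmem) (by omega)
    have h1 : ¬ ((m.parts 0 : ℤ) - 1 - (k:ℤ) < B j) := fun hcon => hjS ⟨hj2, hcon⟩
    have h2 := hno j hj2
    simp only [hBdef] at h1
    omega
  have hks : (k:ℤ) ≤ (m.parts 0 : ℤ) + s := by
    by_cases hc : s + 1 < k - 1
    · have h3 := hnot (s+1) (by omega) hc
      have hmn : (0:ℤ) ≤ (m.parts (s+1) : ℤ) := by positivity
      push_cast at h3
      omega
    · have hse : s = k - 2 := by omega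
      omega
  have hms1 : 1 ≤ m.parts s := by omega
  set P : ℕ → ℕ := fun i => if i < s then m.parts (i+1) - 1
    else if i = s then m.parts 0 + s - k else m.parts i with hPdef
  have hPlt : ∀ i, i < s → P i = m.parts (i+1) - 1 := fun i hi => by simp [hPdef, hi]
  have hPs : P s = m.parts 0 + s - k := by simp [hPdef]
  have hPgt : ∀ i, s < i → P i = m.parts i := fun i hi => by
    simp only [hPdef]
    rw [if_neg (by omega), if_neg (by omega)]
  have hPsz : (P s : ℤ) = (m.parts 0 : ℤ) + (s:ℤ) - k := by rw [hPs]; omega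
  have hm1 : ∀ i, i + 1 ≤ s → 1 ≤ m.parts (i+1) := fun i hi =>
    le_trans hms1 (m.antitone hi)
  have hstep : ∀ i, P (i+1) ≤ P i := by
    intro i
    rcases lt_trichotomy (i+1) s with h | h | h
    · rw [hPlt i (by omega), hPlt (i+1) h]
      have := m.antitone (show i+1 ≤ i+1+1 by omega)
      omega
    · have e1 : P (i+1) = m.parts 0 + s - k := by rw [h, hPs]
      have e2 : P i = m.parts (i+1) - 1 := hPlt i (by omega)
      have e3 : m.parts (i+1) = m.parts s := by rw [h]
      omega
    · have e1 : P (i+1) = m.parts (i+1) := hPgt _ h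
      rcases Nat.lt_or_ge s i with h' | h'
      · rw [hPgt i h', e1]
        exact m.antitone (by omega)
      · have his : i = s := by omega
        have e2 : P i = m.parts 0 + s - k := by rw [his, hPs]
        by_cases hc : s + 1 < k - 1
        · have h3 := hnot (s+1) (by omega) hc
          have e4 : m.parts (i+1) = m.parts (s+1) := by rw [his]
          push_cast at h3
          omega
        · have e4 : m.parts (i+1) = 0 := hvan (i+1) (by omega)
          omega
  have hanti : ∀ ⦃i j : ℕ⦄, i ≤ j → P j ≤ P i := by
    intro i j hij
    induction j, hij using Nat.le_induction with
    | base => exact le_rfl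
    | succ n hn ih => exact le_trans (hstep n) ih
  have hfin : ∃ N, ∀ i, N ≤ i → P i = 0 := ⟨k, fun i hi => by
    rw [hPgt i (by omega)]
    exact hvan i (by omega)⟩
  refine ⟨⟨P, hanti, hfin⟩, ?_, ?_, ?_, ?_⟩
  case _ =>
    intro i
    show P i ≤ m.parts i
    rcases lt_trichotomy i s with h | h | h
    · rw [hPlt i h]
      have := m.antitone (show i ≤ i + 1 by omega)
      omega
    · subst h
      rw [hPs]
      omega
    · rw [hPgt i h]
  case _ =>
    have hsub : ∀ i, P i ≤ m.parts i := by
      intro i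
      rcases lt_trichotomy i s with h | h | h
      · rw [hPlt i h]
        have := m.antitone (show i ≤ i + 1 by omega)
        omega
      · subst h
        rw [hPs]
        omega
      · rw [hPgt i h]
    show ∑ᶠ i, (m.parts i - P i) = k
    have hsupp : ∑ᶠ i, (m.parts i - P i) = ∑ i ∈ Finset.Icc 0 s, (m.parts i - P i) := by
      apply finsum_eq_sum_of_support_subset
      intro i hi
      simp only [Function.mem_support] at hi
      simp only [Finset.coe_Icc, Set.mem_Icc]
      refine ⟨by omega, ?_⟩
      by_contra hcon
      rw [hPgt i (by omega)] at hi
      omega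
    have htel := telescope (fun i => (m.parts i : ℤ)) (fun i => (P i : ℤ)) 0 s (by omega)
      (fun i h1 h2 => by
        have e1 := hPlt i h2
        have e2 := hm1 i (by omega)
        omega)
    have hcast : ((∑ i ∈ Finset.Icc 0 s, (m.parts i - P i) : ℕ) : ℤ)
        = ∑ i ∈ Finset.Icc 0 s, ((m.parts i : ℤ) - (P i : ℤ)) := by
      rw [Nat.cast_sum]
      apply Finset.sum_congr rfl
      intro i _
      exact Nat.cast_sub (hsub i)
    have hfin2 : ((∑ i ∈ Finset.Icc 0 s, (m.parts i - P i) : ℕ) : ℤ) = (k:ℤ) := by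
      rw [hcast]
      have h2 : ∑ i ∈ Finset.Icc 0 s, ((m.parts i : ℤ) - (P i : ℤ))
          = (m.parts 0 : ℤ) - (P s : ℤ) + ((s : ℤ) - ((0:ℕ) : ℤ)) := htel
      rw [h2, hPsz]
      push_cast
      ring
    rw [hsupp]
    exact_mod_cast hfin2
  case _ =>
    set bb : Partition := (⟨P, hanti, hfin⟩ : Partition) with hbb
    have hrowlt : ∀ i, i ≤ s → P i < m.parts i := by
      intro i hi
      rcases Nat.lt_or_ge i s with h | h
      · rw [hPlt i h]
        have h1 := m.antitone (show i ≤ i+1 by omega)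
        have h2 := hm1 i (by omega)
        omega
      · have : i = s := by omega
        subst this
        rw [hPs]
        omega
    have hrow_le : ∀ p : ℕ × ℕ, p ∈ cells m bb → p.1 ≤ s := by
      rintro ⟨i, j⟩ hp
      by_contra hcon
      have h1 : P i ≤ j := hp.1
      have h2 : j < m.parts i := hp.2
      rw [hPgt i (by omega)] at h1
      omega
    have hRsymm : Symmetric (fun u v => u ∈ cells m bb ∧ v ∈ cells m bb ∧ Adj u v) :=
      fun u v h => ⟨h.2.1, h.1, adj_symm h.2.2⟩
    have hrowpath : ∀ i j d, (i, j) ∈ cells m bb → (i, j+d) ∈ cells m bb →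
        Relation.ReflTransGen (fun u v => u ∈ cells m bb ∧ v ∈ cells m bb ∧ Adj u v)
          (i, j) (i, j+d) := by
      intro i j d
      induction d with
      | zero => intro _ _; exact Relation.ReflTransGen.refl
      | succ n ih =>
        intro hc1 hc2
        have ha1 : P i ≤ j := hc1.1
        have hb1 : P i ≤ j + (n+1) := hc2.1
        have hb2 : j + (n+1) < m.parts i := hc2.2
        have hmid : (i, j+n) ∈ cells m bb :=
          ⟨show P i ≤ j + n by omega, show j + n < m.parts i by omega⟩
        refine Relation.ReflTransGen.tail (ih hc1 hmid) ?_
        exact ⟨hmid, hc2, Or.inl ⟨rfl, Or.inl rfl⟩⟩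
    have hchain : ∀ i d, i + d ≤ s →
        Relation.ReflTransGen (fun u v => u ∈ cells m bb ∧ v ∈ cells m bb ∧ Adj u v)
          (i, P i) (i + d, P (i + d)) := by
      intro i d
      induction d with
      | zero => intro _; exact Relation.ReflTransGen.refl
      | succ n ih =>
        intro hds
        have h1 := ih (by omega)
        have hlt : i + n < s := by omega
        have hc1 : (i+n, P (i+n)) ∈ cells m bb :=
          ⟨show P (i+n) ≤ P (i+n) from le_rfl, show P (i+n) < m.parts (i+n) from hrowlt _ (by omega)⟩
        have hc2 : (i+n+1, P (i+n)) ∈ cells m bb := by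
          refine ⟨show P (i+n+1) ≤ P (i+n) from hstep _, show P (i+n) < m.parts (i+n+1) from ?_⟩
          rw [hPlt _ hlt]
          have := hm1 (i+n) (by omega)
          omega
        have h2 := Relation.ReflTransGen.tail h1 ⟨hc1, hc2, Or.inr ⟨rfl, Or.inl rfl⟩⟩
        have hc3 : (i+n+1, P (i+n+1)) ∈ cells m bb :=
          ⟨show P (i+n+1) ≤ P (i+n+1) from le_rfl,
           show P (i+n+1) < m.parts (i+n+1) from hrowlt _ (by omega)⟩
        have heq : P (i+n+1) + (P (i+n) - P (i+n+1)) = P (i+n) := by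
          have := hstep (i+n)
          omega
        have h3 := hrowpath (i+n+1) (P (i+n+1)) (P (i+n) - P (i+n+1)) hc3
          (by rw [heq]; exact hc2)
        rw [heq] at h3
        exact h2.trans ((@Relation.ReflTransGen.stdSymm _ _ ⟨hRsymm⟩).symm _ _ h3)
    have key : ∀ (c d : ℕ × ℕ), c ∈ cells m bb → d ∈ cells m bb → c.1 ≤ d.1 →
        Relation.ReflTransGen (fun u v => u ∈ cells m bb ∧ v ∈ cells m bb ∧ Adj u v) c d := by
      rintro ⟨i1, j1⟩ ⟨i2, j2⟩ hc hd hle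
      have hi1 : i1 ≤ s := hrow_le _ hc
      have hi2 : i2 ≤ s := hrow_le _ hd
      have hc' : (i1, P i1) ∈ cells m bb :=
        ⟨show P i1 ≤ P i1 from le_rfl, show P i1 < m.parts i1 from hrowlt _ hi1⟩
      have hd' : (i2, P i2) ∈ cells m bb :=
        ⟨show P i2 ≤ P i2 from le_rfl, show P i2 < m.parts i2 from hrowlt _ hi2⟩
      have hp1 : P i1 ≤ j1 := hc.1
      have hp2 : P i2 ≤ j2 := hd.1
      have p1 : Relation.ReflTransGen (fun u v => u ∈ cells m bb ∧ v ∈ cells m bb ∧ Adj u v)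
          (i1, P i1) (i1, j1) := by
        have heq : P i1 + (j1 - P i1) = j1 := by omega
        have := hrowpath i1 (P i1) (j1 - P i1) hc' (by rw [heq]; exact hc)
        rwa [heq] at this
      have p2 : Relation.ReflTransGen (fun u v => u ∈ cells m bb ∧ v ∈ cells m bb ∧ Adj u v)
          (i1, P i1) (i2, P i2) := by
        have heq : i1 + (i2 - i1) = i2 := by
          simp only [Prod.fst] at hle
          omega
        have := hchain i1 (i2 - i1) (by omega)
        rwa [heq] at this
      have p3 : Relation.ReflTransGen (fun u v => u ∈ cells m bb ∧ v ∈ cells m bb ∧ Adj u v)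
          (i2, P i2) (i2, j2) := by
        have heq : P i2 + (j2 - P i2) = j2 := by omega
        have := hrowpath i2 (P i2) (j2 - P i2) hd' (by rw [heq]; exact hd)
        rwa [heq] at this
      exact (((@Relation.ReflTransGen.stdSymm _ _ ⟨hRsymm⟩).symm _ _ p1).trans p2).trans p3
    intro c hcm d hdm
    rcases le_total c.1 d.1 with h | h
    · exact key c d hcm hdm h
    · exact (@Relation.ReflTransGen.stdSymm _ _ ⟨hRsymm⟩).symm _ _ (key d c hdm hcm h)
  case _ =>
    rintro ⟨i, j, hc1, hc2, hc3, hc4⟩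
    have hi1 : i + 1 ≤ s := by
      by_contra hcon
      have h1 : P (i+1) ≤ j := hc2.1
      have h2 : j < m.parts (i+1) := hc2.2
      rw [hPgt (i+1) (by omega)] at h1
      omega
    have hp := hPlt i (by omega)
    have e1 : P i ≤ j := hc1.1
    have e2 : j + 1 < m.parts (i+1) := hc4.2
    have e3 := hm1 i (by omega)
    omega


end Aux

/-- for `k ≥ 2` and `λ_1 < k`, the residues
`γ_1, …, γ_{k-1}` (`γ_i ≡ λᶜ_i - i (mod k)`, taken in `{1,…,k}`) are pairwise
distinct iff the `k`-core of `λ` has at most one part. -/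
theorem gamma_distinct_iff_core_small (k : ℕ) (hk : 2 ≤ k) (l : Partition)
    (h1 : l.parts 0 < k) (c : Partition) (hc : IsCore k l c) :
    (∀ i ∈ Finset.Icc 1 (k-1), ∀ j ∈ Finset.Icc 1 (k-1),
        gammaSeq k l i = gammaSeq k l j → i = j) ↔ length c ≤ 1 := by
  obtain ⟨hrtg, hcore⟩ := hc
  have main : ∀ x : Partition, Relation.ReflTransGen (fun a b => IsRimHook a b k) l x →
      (∀ i, x.parts i ≤ l.parts i) ∧
      Multiset.map (gres k l) (Finset.range (k-1)).val
        = Multiset.map (gres k x) (Finset.range (k-1)).val := by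
    intro x hx
    induction hx with
    | refl => exact ⟨fun i => le_rfl, rfl⟩
    | @tail p q hlp hpq ih =>
      refine ⟨fun i => le_trans (hpq.1 i) (ih.1 i), ?_⟩
      have hvan : ∀ j, k - 1 ≤ j → (conj p).parts j = 0 := by
        intro j hj
        have h2 : (conj p).parts j ≤ (conj l).parts j := conj_mono ih.1 j
        have h3 : (conj l).parts j = 0 := conj_parts_eq_zero (by omega)
        omega
      rw [ih.2]
      exact (gm_step hk hvan hpq).symm
  obtain ⟨hsubc, hmeq⟩ := main c hrtg
  have hgamma : ∀ t : ℕ,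
      gammaSeq k l (t+1) = resid k (((conj l).parts t : ℤ) - ((t:ℤ)+1)) := by
    intro t
    unfold gammaSeq betaSeq
    have e : t + 1 - 1 = t := by omega
    rw [e]
    congr 1
  have hnd : (∀ i ∈ Finset.Icc 1 (k-1), ∀ j ∈ Finset.Icc 1 (k-1),
        gammaSeq k l i = gammaSeq k l j → i = j)
      ↔ (Multiset.map (gres k l) (Finset.range (k-1)).val).Nodup := by
    rw [Multiset.nodup_map_iff_inj_on (Finset.range (k-1)).nodup]
    constructor
    · intro H i hi j hj hij
      have hi' : i < k-1 := by simpa using hi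
      have hj' : j < k-1 := by simpa using hj
      have h := H (i+1) (by simp only [Finset.mem_Icc]; omega)
        (j+1) (by simp only [Finset.mem_Icc]; omega) ?_
      · omega
      · rw [hgamma i, hgamma j, resid_eq_resid_iff (by omega)]
        exact hij
    · intro H i hi j hj hij
      simp only [Finset.mem_Icc] at hi hj
      have h2 : gres k l (i-1) = gres k l (j-1) := by
        unfold gres
        rw [← resid_eq_resid_iff (show 0 < k by omega), ← hgamma (i-1), ← hgamma (j-1),
          show i - 1 + 1 = i by omega, show j - 1 + 1 = j by omega]
        exact hij
      have h := H (i-1) (by simp only [Finset.mem_val, Finset.mem_range]; omega)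
        (j-1) (by simp only [Finset.mem_val, Finset.mem_range]; omega) h2
      omega
  rw [hnd, hmeq]
  have hvanc : ∀ j, k - 1 ≤ j → (conj c).parts j = 0 := by
    intro j hj
    have h2 : (conj c).parts j ≤ (conj l).parts j := conj_mono hsubc j
    have h3 : (conj l).parts j = 0 := conj_parts_eq_zero (by omega)
    omega
  have hlen0 : length c = (conj c).parts 0 := length_eq_conj_parts c
  constructor
  · intro hnodup
    rw [hlen0]
    by_contra hcon
    push_neg at hcon
    have hinj := (Multiset.nodup_map_iff_inj_on (Finset.range (k-1)).nodup).mp hnodup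
    have hno : ∀ j, j < k - 1 →
        ((conj c).parts j : ℤ) - ((j:ℤ)+1) ≠ ((conj c).parts 0 : ℤ) - 1 - (k:ℤ) := by
      intro j hj heq
      have hj0 : j ≠ 0 := by
        intro h0
        subst h0
        omega
      have hres : gres k c j = gres k c 0 := by
        unfold gres
        rw [heq, show ((conj c).parts 0:ℤ) - 1 - (k:ℤ)
          = (((conj c).parts 0:ℤ) - (((0:ℕ):ℤ)+1)) - k by push_cast; ring,
          Int.sub_emod, Int.emod_self, sub_zero, Int.emod_emod_of_dvd _ dvd_rfl]
      exact hj0 (hinj j (by simp only [Finset.mem_val, Finset.mem_range]; omega)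
        0 (by simp only [Finset.mem_val, Finset.mem_range]; omega) hres)
    obtain ⟨b', hb'⟩ := exists_rimhook k hk (conj c) hvanc (by omega) hno
    have hrh := isRimHook_conj hb'
    rw [conj_conj] at hrh
    exact hcore _ hrh
  · intro hlen
    rw [Multiset.nodup_map_iff_inj_on (Finset.range (k-1)).nodup]
    intro i hi j hj hij
    have hi' : i < k-1 := by simpa using hi
    have hj' : j < k-1 := by simpa using hj
    have hp0 : (conj c).parts 0 ≤ 1 := by omega
    have h1 : (conj c).parts i ≤ 1 := le_trans ((conj c).antitone (Nat.zero_le i)) hp0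
    have h2 : (conj c).parts j ≤ 1 := le_trans ((conj c).antitone (Nat.zero_le j)) hp0
    unfold gres at hij
    have hdvd : (k:ℤ) ∣ (((conj c).parts j : ℤ) - ((j:ℤ)+1))
        - (((conj c).parts i : ℤ) - ((i:ℤ)+1)) := Int.ModEq.dvd hij
    rcases lt_trichotomy i j with h | h | h
    · have hmono := (conj c).antitone (show i ≤ j by omega)
      have hneg : (k:ℤ) ∣ -((((conj c).parts j : ℤ) - ((j:ℤ)+1))
          - (((conj c).parts i : ℤ) - ((i:ℤ)+1))) := dvd_neg.mpr hdvd
      have := Int.le_of_dvd (by omega) hneg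
      omega
    · exact h
    · have hmono := (conj c).antitone (show j ≤ i by omega)
      have := Int.le_of_dvd (by omega) hdvd
      omega

end Petrie
end

section
/- Let k ≥ 2 and let λ, μ be partitions with μ ⊂ λ, λ_1 < k, λ/μ a rim hook of size k, and suppose the residues γ_i ≡ λᶜ_i - i (mod k) taken in {1,...,k} are pairwise distinct for i = 1,...,k-1. Then ninv(γ(λᶜ)) + ninv(γ(μᶜ)) ≡ k + ht(λ/μ) + 1 (mod 2), where ninv counts pairs i < j with γ_i < γ_j. -/
open scoped Classical

namespace Petrie

/-! ### Auxiliary lemmas for Statement 14 -/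

def swapf (t i : ℕ) : ℕ := if i = t then t + 1 else if i = t + 1 then t else i

lemma swapf_invol (t i : ℕ) : swapf t (swapf t i) = i := by
  simp only [swapf]; split_ifs <;> omega

lemma swapf_mem {k t i : ℕ} (ht1 : 1 ≤ t) (ht2 : t + 1 ≤ k - 1) (h1 : 1 ≤ i)
    (h2 : i ≤ k - 1) : 1 ≤ swapf t i ∧ swapf t i ≤ k - 1 := by
  simp only [swapf]; split_ifs <;> omega

lemma swapf_lt {t i j : ℕ} (hij : i < j) (hx : ¬(i = t ∧ j = t + 1)) :
    swapf t i < swapf t j := by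
  simp only [swapf]; split_ifs <;> omega

lemma swapf_pair_ne {t i j : ℕ} (hij : i < j) :
    ¬(swapf t i = t ∧ swapf t j = t + 1) := by
  simp only [swapf]; split_ifs <;> omega

lemma ninv_congr (k : ℕ) (g g' : ℕ → ℤ) (h : ∀ i, 1 ≤ i → i ≤ k - 1 → g i = g' i) :
    ninv k g = ninv k g' := by
  unfold ninv
  apply congrArg
  apply Finset.filter_congr
  intro p hp
  rw [Finset.mem_product, Finset.mem_Icc, Finset.mem_Icc] at hp
  rw [h p.1 hp.1.1 hp.1.2, h p.2 hp.2.1 hp.2.2]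

lemma ninv_swap (k t : ℕ) (g : ℕ → ℤ) (ht1 : 1 ≤ t) (ht2 : t + 1 ≤ k - 1)
    (hne : g t ≠ g (t + 1)) :
    (ninv k (fun i => g (swapf t i)) + ninv k g) % 2 = 1 := by
  have key : ∀ h : ℕ → ℤ,
      ninv k h =
        ((((Finset.Icc 1 (k-1)) ×ˢ (Finset.Icc 1 (k-1))).filter
          (fun p => (p.1 < p.2 ∧ h p.1 < h p.2) ∧ ¬ p = (t, t+1))).card)
        + (if h t < h (t+1) then 1 else 0) := by
    intro h
    have h1 := Finset.card_filter_add_card_filter_not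
      (s := ((Finset.Icc 1 (k-1)) ×ˢ (Finset.Icc 1 (k-1))).filter
          (fun p => p.1 < p.2 ∧ h p.1 < h p.2)) (p := fun p => p = (t, t+1))
    rw [Finset.filter_filter, Finset.filter_filter] at h1
    have h2 : ((((Finset.Icc 1 (k-1)) ×ˢ (Finset.Icc 1 (k-1))).filter
        (fun p => (p.1 < p.2 ∧ h p.1 < h p.2) ∧ p = (t, t+1))))
        = if h t < h (t+1) then {(t, t+1)} else ∅ := by
      ext p
      simp only [Finset.mem_filter, Finset.mem_product, Finset.mem_Icc]
      constructor
      · rintro ⟨hA, hQ, rfl⟩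
        rw [if_pos hQ.2]
        exact Finset.mem_singleton_self _
      · intro hp
        split_ifs at hp with hh
        · rw [Finset.mem_singleton] at hp
          subst hp
          refine ⟨⟨⟨ht1, by omega⟩, by omega, ht2⟩, ⟨by omega, hh⟩, rfl⟩
        · exact absurd hp (Finset.notMem_empty _)
    have h3 : ninv k h = ((((Finset.Icc 1 (k-1)) ×ˢ (Finset.Icc 1 (k-1))).filter
          (fun p => p.1 < p.2 ∧ h p.1 < h p.2)).card) := rfl
    rw [h3, ← h1, h2]
    split_ifs <;> simp [add_comm]
  have hcard : ((((Finset.Icc 1 (k-1)) ×ˢ (Finset.Icc 1 (k-1))).filter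
          (fun p => (p.1 < p.2 ∧ g (swapf t p.1) < g (swapf t p.2)) ∧ ¬ p = (t, t+1))).card)
      = ((((Finset.Icc 1 (k-1)) ×ˢ (Finset.Icc 1 (k-1))).filter
          (fun p => (p.1 < p.2 ∧ g p.1 < g p.2) ∧ ¬ p = (t, t+1))).card) := by
    apply Finset.card_bij' (i := fun p _ => (swapf t p.1, swapf t p.2))
      (j := fun p _ => (swapf t p.1, swapf t p.2))
    · intro p hp
      rw [Finset.mem_filter, Finset.mem_product, Finset.mem_Icc, Finset.mem_Icc] at hp ⊢
      obtain ⟨⟨hm1, hm2⟩, ⟨hlt, hval⟩, hpx⟩ := hp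
      have hx : ¬(p.1 = t ∧ p.2 = t + 1) := by
        intro he; exact hpx (Prod.ext_iff.mpr he)
      refine ⟨⟨swapf_mem ht1 ht2 hm1.1 hm1.2, swapf_mem ht1 ht2 hm2.1 hm2.2⟩,
        ⟨swapf_lt hlt hx, hval⟩, ?_⟩
      intro hc
      rw [Prod.ext_iff] at hc
      exact swapf_pair_ne hlt hc
    · intro p hp
      rw [Finset.mem_filter, Finset.mem_product, Finset.mem_Icc, Finset.mem_Icc] at hp ⊢
      obtain ⟨⟨hm1, hm2⟩, ⟨hlt, hval⟩, hpx⟩ := hp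
      have hx : ¬(p.1 = t ∧ p.2 = t + 1) := by
        intro he; exact hpx (Prod.ext_iff.mpr he)
      refine ⟨⟨swapf_mem ht1 ht2 hm1.1 hm1.2, swapf_mem ht1 ht2 hm2.1 hm2.2⟩,
        ⟨swapf_lt hlt hx, by rwa [swapf_invol, swapf_invol]⟩, ?_⟩
      intro hc
      rw [Prod.ext_iff] at hc
      exact swapf_pair_ne hlt hc
    · intro p _; exact Prod.ext_iff.mpr ⟨swapf_invol t p.1, swapf_invol t p.2⟩
    · intro p _; exact Prod.ext_iff.mpr ⟨swapf_invol t p.1, swapf_invol t p.2⟩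
  rw [key (fun i => g (swapf t i)), key g, hcard]
  have e1 : swapf t t = t + 1 := by simp [swapf]
  have e2 : swapf t (t+1) = t := by simp [swapf]
  rw [e1, e2]
  rcases lt_trichotomy (g t) (g (t+1)) with h | h | h
  · rw [if_pos h, if_neg (by omega : ¬ g (t+1) < g t)]; omega
  · exact absurd h hne
  · rw [if_neg (by omega : ¬ g t < g (t+1)), if_pos h]; omega

lemma ninv_cycle (k : ℕ) : ∀ (d : ℕ) (g g' : ℕ → ℤ) (p : ℕ), 1 ≤ p → p + d ≤ k - 1 →
    (∀ j, 1 ≤ j → j ≤ k - 1 → (j < p ∨ p + d < j) → g' j = g j) →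
    (∀ j, p ≤ j → j < p + d → g' j = g (j+1)) →
    g' (p + d) = g p →
    (∀ i, 1 ≤ i → i ≤ k - 1 → ∀ j, 1 ≤ j → j ≤ k - 1 → g i = g j → i = j) →
    (ninv k g' + ninv k g) % 2 = d % 2 := by
  intro d
  induction d with
  | zero =>
    intro g g' p hp1 hp2 hoff _ hlast _
    have : ninv k g' = ninv k g := by
      apply ninv_congr
      intro i hi1 hi2
      rcases Nat.lt_trichotomy i p with h | h | h
      · exact hoff i hi1 hi2 (Or.inl h)
      · subst h; simpa using hlast
      · exact hoff i hi1 hi2 (Or.inr (by omega))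
    omega
  | succ d ih =>
    intro g g' p hp1 hp2 hoff hshift hlast hinj
    set g'' : ℕ → ℤ := fun i => g (swapf p i) with hg''
    have hne : g p ≠ g (p + 1) := by
      intro h
      have := hinj p hp1 (by omega) (p+1) (by omega) (by omega) h
      omega
    have hswap := ninv_swap k p g hp1 (by omega) hne
    rw [← hg''] at hswap
    have hih := ih g'' g' (p + 1) (by omega) (by omega) ?_ ?_ ?_ ?_
    · omega
    · intro j hj1 hj2 hj3
      rcases hj3 with hj3 | hj3
      · rcases Nat.lt_or_ge j p with h | h
        · rw [hoff j hj1 hj2 (Or.inl h), hg'']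
          simp only
          rw [show swapf p j = j by simp only [swapf]; split_ifs <;> omega]
        · have hjp : j = p := by omega
          subst hjp
          rw [hshift j le_rfl (by omega), hg'']
          simp only
          rw [show swapf j j = j + 1 by simp [swapf]]
      · rw [hoff j hj1 hj2 (Or.inr (by omega)), hg'']
        simp only
        rw [show swapf p j = j by simp only [swapf]; split_ifs <;> omega]
    · intro j hj1 hj2
      rw [hshift j (by omega) (by omega), hg'']
      simp only
      rw [show swapf p (j+1) = j + 1 by simp only [swapf]; split_ifs <;> omega]
    · rw [show p + 1 + d = p + (d+1) by omega, hlast, hg'']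
      simp only
      rw [show swapf p (p+1) = p by simp [swapf]]
    · intro i hi1 hi2 j hj1 hj2 hval
      rw [hg''] at hval
      simp only at hval
      have hmi := swapf_mem (i := i) hp1 (by omega) hi1 hi2
      have hmj := swapf_mem (i := j) hp1 (by omega) hj1 hj2
      have heq := hinj _ hmi.1 hmi.2 _ hmj.1 hmj.2 hval
      have h2 := congrArg (swapf p) heq
      rwa [swapf_invol, swapf_invol] at h2

lemma conj_parts_eq (l : Partition) (m N : ℕ) (h1 : l.parts N ≤ m)
    (h2 : ∀ n, n < N → m < l.parts n) : (conj l).parts m = N := by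
  show sInf {n | l.parts n ≤ m} = N
  have hmem : N ∈ {n | l.parts n ≤ m} := h1
  refine le_antisymm (Nat.sInf_le hmem) ?_
  by_contra h
  push_neg at h
  have hmem2 := Nat.sInf_mem (⟨N, hmem⟩ : {n | l.parts n ≤ m}.Nonempty)
  have h3 := h2 _ h
  simp only [Set.mem_setOf_eq] at hmem2
  omega

lemma resid_add_self (k : ℕ) (x : ℤ) : resid k (x + k) = resid k x := by
  unfold resid
  rw [show x + (k:ℤ) = x + (k:ℤ) * 1 by ring, Int.add_mul_emod_self_left]

/-- if `λ/μ` is a rim hook of size `k`, `λ_1 < k`, and the `γ`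
residues of `λ` are pairwise distinct, then
`ninv(γ(λᶜ)) + ninv(γ(μᶜ)) ≡ k + ht(λ/μ) + 1 (mod 2)`. -/
theorem ninv_parity_after_rim_hook_removal (k : ℕ) (hk : 2 ≤ k) (la mu : Partition)
    (h1 : la.parts 0 < k) (hrh : IsRimHook la mu k)
    (hdist : ∀ i ∈ Finset.Icc 1 (k-1), ∀ j ∈ Finset.Icc 1 (k-1),
        gammaSeq k la i = gammaSeq k la j → i = j) :
    (ninv k (gammaSeq k la) + ninv k (gammaSeq k mu)) % 2
      = (k + height la mu + 1) % 2 := by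
  classical
  obtain ⟨hsub, hsum, hconn, h2x2⟩ := hrh
  -- rows of the skew shape
  have hSne : {i | mu.parts i < la.parts i}.Nonempty := by
    by_contra h
    rw [Set.not_nonempty_iff_eq_empty] at h
    have hzero : k = ∑ᶠ i : ℕ, (0 : ℕ) := by
      rw [← hsum]
      apply finsum_congr
      intro i
      have : ¬ mu.parts i < la.parts i := fun hc =>
        (Set.notMem_empty i) (h ▸ (hc : i ∈ {i | mu.parts i < la.parts i}))
      omega
    simp at hzero
    omega
  obtain ⟨N0, hN0⟩ := la.fin_supp
  have hSbdd : BddAbove {i | mu.parts i < la.parts i} := by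
    refine ⟨N0, fun i hi => ?_⟩
    simp only [Set.mem_setOf_eq] at hi
    by_contra hiN
    push_neg at hiN
    have := hN0 i (by omega)
    omega
  set a := sInf {i | mu.parts i < la.parts i} with ha
  set b := sSup {i | mu.parts i < la.parts i} with hb
  have haS : mu.parts a < la.parts a := Nat.sInf_mem hSne
  have hbS : mu.parts b < la.parts b := Nat.sSup_mem hSne hSbdd
  have hab : a ≤ b := Nat.sInf_le hbS
  have hmemS : ∀ i, mu.parts i < la.parts i → a ≤ i ∧ i ≤ b :=
    fun i hi => ⟨Nat.sInf_le hi, le_csSup hSbdd hi⟩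
  have hout : ∀ i, i < a ∨ b < i → la.parts i = mu.parts i := by
    intro i hi
    have h1 := hsub i
    have h2 : ¬ mu.parts i < la.parts i := fun hc => by have := hmemS i hc; omega
    omega
  -- contact between consecutive rows
  have contact : ∀ i, a ≤ i → i + 1 ≤ b → ∃ j, mu.parts i ≤ j ∧ j < la.parts i ∧
      mu.parts (i+1) ≤ j ∧ j < la.parts (i+1) := by
    intro i hia hib
    have hca : (a, mu.parts a) ∈ cells la mu := ⟨le_rfl, haS⟩
    have hcb : (b, mu.parts b) ∈ cells la mu := ⟨le_rfl, hbS⟩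
    have key : ∀ c d : ℕ × ℕ,
        Relation.ReflTransGen (fun x y => x ∈ cells la mu ∧ y ∈ cells la mu ∧ Adj x y) c d →
        c.1 ≤ i → i + 1 ≤ d.1 → ∃ j, mu.parts i ≤ j ∧ j < la.parts i ∧
          mu.parts (i+1) ≤ j ∧ j < la.parts (i+1) := by
      intro c d h
      induction h with
      | refl => intro h1 h2; omega
      | @tail e f hpath hstep ih =>
        intro h1 h2
        rcases Nat.lt_or_ge i e.1 with he | he
        · exact ih h1 (by omega)
        · obtain ⟨hec, hfc, hadj⟩ := hstep
          rcases hadj with ⟨hr, _⟩ | ⟨hcol, hv⟩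
          · omega
          · rcases hv with hv | hv
            · have he1 : e.1 = i := by omega
              have hf1 : f.1 = i + 1 := by omega
              obtain ⟨hm1, hm2⟩ := hec
              obtain ⟨hm3, hm4⟩ := hfc
              refine ⟨e.2, ?_, ?_, ?_, ?_⟩
              · rw [← he1]; exact hm1
              · rw [← he1]; exact hm2
              · rw [← hf1, hcol]; exact hm3
              · rw [← hf1, hcol]; exact hm4
            · omega
    exact key _ _ (hconn _ hca _ hcb) hia (by omega)
  -- consecutive-row relation
  have hstepD : ∀ i, a ≤ i → i < b → la.parts (i+1) = mu.parts i + 1 := by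
    intro i hia hib
    obtain ⟨j, hj1, hj2, hj3, hj4⟩ := contact i hia (by omega)
    by_contra hne
    have hge : mu.parts i + 2 ≤ la.parts (i+1) := by omega
    have hL : la.parts (i+1) ≤ la.parts i := la.antitone (by omega)
    have hMm : mu.parts (i+1) ≤ mu.parts i := mu.antitone (by omega)
    refine h2x2 ⟨i, mu.parts i, ⟨le_rfl, ?_⟩, ⟨?_, ?_⟩, ⟨?_, ?_⟩, ⟨?_, ?_⟩⟩
    · show mu.parts i < la.parts i; omega
    · show mu.parts (i+1) ≤ mu.parts i; omega
    · show mu.parts i < la.parts (i+1); omega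
    · show mu.parts i ≤ mu.parts i + 1; omega
    · show mu.parts i + 1 < la.parts i; omega
    · show mu.parts (i+1) ≤ mu.parts i + 1; omega
    · show mu.parts i + 1 < la.parts (i+1); omega
  have hin : ∀ i, a ≤ i → i ≤ b → mu.parts i < la.parts i := by
    intro i hia hib
    rcases Nat.eq_or_lt_of_le hib with h | h
    · rw [h]; exact hbS
    · obtain ⟨j, hj1, hj2, _, _⟩ := contact i hia (by omega); omega
  -- telescoping sum
  have tele : ∀ t, a + t ≤ b →
      (∑ i ∈ Finset.Icc a (a+t), (la.parts i - mu.parts i)) + mu.parts (a+t)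
        = la.parts a + t := by
    intro t
    induction t with
    | zero =>
      intro _
      simp only [Nat.add_zero, Finset.Icc_self, Finset.sum_singleton]
      omega
    | succ t ih =>
      intro ht
      rw [show a + (t+1) = (a + t) + 1 by omega, Finset.sum_Icc_succ_top (by omega)]
      have h1 := ih (by omega)
      have h2 := hstepD (a+t) (by omega) (by omega)
      have h3 := hin (a+t+1) (by omega) (by omega)
      omega
  have hsupp : Function.support (fun i => la.parts i - mu.parts i) ⊆ ↑(Finset.Icc a b) := by
    intro i hi
    simp only [Function.mem_support] at hi
    have h1 := hsub i
    have h2 := hmemS i (by omega)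
    simp only [Finset.coe_Icc, Set.mem_Icc]
    omega
  have hsum2 : (∑ i ∈ Finset.Icc a b, (la.parts i - mu.parts i)) = k := by
    rw [← finsum_eq_sum_of_support_subset _ hsupp]
    exact hsum
  have hkey : la.parts a + b = k + mu.parts b + a := by
    have h1 := tele (b - a) (by omega)
    rw [show a + (b - a) = b by omega] at h1
    omega
  have hheight : height la mu = b - a := by
    unfold height
    have hset : {i | mu.parts i < la.parts i} = ↑(Finset.Icc a b) := by
      ext i
      simp only [Set.mem_setOf_eq, Finset.coe_Icc, Set.mem_Icc]
      exact ⟨fun h => hmemS i h, fun h => hin i h.1 h.2⟩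
    rw [hset, Set.ncard_coe_finset, Nat.card_Icc]
    omega
  -- bounds
  have hMbLa : mu.parts b + 1 ≤ la.parts a := by
    have := la.antitone hab
    omega
  have hLa : la.parts a ≤ k - 1 := by
    have := la.antitone (Nat.zero_le a)
    omega
  -- conjugate computations
  have hconjLa_p : (conj la).parts (mu.parts b) = b + 1 := by
    apply conj_parts_eq
    · have h1 := hout (b+1) (Or.inr (by omega))
      have h2 := mu.antitone (show b ≤ b+1 by omega)
      omega
    · intro n hn
      have := la.antitone (show n ≤ b by omega)
      omega
  have hconjMu_q : (conj mu).parts (la.parts a - 1) = a := by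
    apply conj_parts_eq
    · omega
    · intro n hn
      have h1 := hout n (Or.inl hn)
      have h2 := la.antitone (show n ≤ a by omega)
      omega
  have hI1 : ∀ j, 1 ≤ j → j ≤ mu.parts b →
      (conj mu).parts (j-1) = (conj la).parts (j-1) := by
    intro j h1 h2
    show sInf {n | mu.parts n ≤ j - 1} = sInf {n | la.parts n ≤ j - 1}
    congr 1
    ext n
    simp only [Set.mem_setOf_eq]
    constructor
    · intro h
      have hnb : b < n := by
        by_contra hc
        push_neg at hc
        have := mu.antitone hc
        omega
      have := hout n (Or.inr hnb)
      omega
    · intro h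
      have := hsub n
      omega
  have hI2 : ∀ j, la.parts a + 1 ≤ j →
      (conj mu).parts (j-1) = (conj la).parts (j-1) := by
    intro j h1
    show sInf {n | mu.parts n ≤ j - 1} = sInf {n | la.parts n ≤ j - 1}
    congr 1
    ext n
    simp only [Set.mem_setOf_eq]
    constructor
    · intro h
      rcases Nat.lt_or_ge n a with hc | hc
      · have := hout n (Or.inl hc)
        omega
      · have := la.antitone hc
        omega
    · intro h
      have := hsub n
      omega
  have hI3 : ∀ j, mu.parts b + 1 ≤ j → j < la.parts a →
      (conj mu).parts (j-1) + 1 = (conj la).parts j := by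
    intro j hj1 hj2
    have hb1 : la.parts (b+1) ≤ j := by
      have h1 := hout (b+1) (Or.inr (by omega))
      have h2 := mu.antitone (show b ≤ b+1 by omega)
      omega
    have hNmem : {n | la.parts n ≤ j}.Nonempty := ⟨b+1, hb1⟩
    have hNcomp : (conj la).parts j = sInf {n | la.parts n ≤ j} := rfl
    have hN1 : la.parts ((conj la).parts j) ≤ j := by
      rw [hNcomp]; exact Nat.sInf_mem hNmem
    have hN2 : ∀ n, n < (conj la).parts j → j < la.parts n := by
      intro n hn
      by_contra hc
      push_neg at hc
      have := Nat.sInf_le (show n ∈ {n | la.parts n ≤ j} from hc)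
      rw [← hNcomp] at this
      omega
    have hNa : a + 1 ≤ (conj la).parts j := by
      by_contra hc
      push_neg at hc
      have := la.antitone (show (conj la).parts j ≤ a by omega)
      omega
    have hNb : (conj la).parts j ≤ b + 1 := by
      rw [hNcomp]
      exact Nat.sInf_le hb1
    have hres : (conj mu).parts (j-1) = (conj la).parts j - 1 := by
      apply conj_parts_eq
      · rcases Nat.lt_or_ge ((conj la).parts j - 1) b with h | h
        · have hD := hstepD ((conj la).parts j - 1) (by omega) h
          rw [show (conj la).parts j - 1 + 1 = (conj la).parts j by omega] at hD
          omega
        · have hNb' : (conj la).parts j - 1 = b := by omega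
          rw [hNb']
          omega
      · intro n hn
        rcases Nat.lt_or_ge n a with h | h
        · have h1 := hout n (Or.inl h)
          have h2 := hN2 n (by omega)
          omega
        · have h1 := hstepD n h (by omega)
          have h2 := hN2 (n+1) (by omega)
          omega
    omega
  -- gamma relations
  have hbeta_off : ∀ j, 1 ≤ j → j ≤ k - 1 → (j < mu.parts b + 1 ∨ la.parts a < j) →
      gammaSeq k mu j = gammaSeq k la j := by
    intro j h1 h2 h3
    unfold gammaSeq betaSeq
    rcases h3 with h3 | h3
    · rw [hI1 j h1 (by omega)]
    · rw [hI2 j (by omega)]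
  have hbeta_shift : ∀ j, mu.parts b + 1 ≤ j → j < la.parts a →
      gammaSeq k mu j = gammaSeq k la (j+1) := by
    intro j h1 h2
    unfold gammaSeq betaSeq
    have h3 := hI3 j h1 h2
    congr 1
    rw [show j + 1 - 1 = j from rfl]
    have h4 : ((conj mu).parts (j-1) : ℤ) + 1 = ((conj la).parts j : ℤ) := by
      exact_mod_cast congrArg (fun x : ℕ => (x : ℤ)) h3
    push_cast
    omega
  have hbeta_last : gammaSeq k mu (la.parts a) = gammaSeq k la (mu.parts b + 1) := by
    unfold gammaSeq betaSeq
    rw [hconjMu_q, show mu.parts b + 1 - 1 = mu.parts b from rfl, hconjLa_p]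
    have hcast : ((b:ℤ) + 1 : ℤ) - ((mu.parts b : ℤ) + 1) = ((a:ℤ) - (la.parts a : ℤ)) + k := by
      omega
    rw [show ((b+1 : ℕ) : ℤ) - ((mu.parts b + 1 : ℕ) : ℤ)
        = ((a : ℕ) : ℤ) - ((la.parts a : ℕ) : ℤ) + (k : ℤ) by push_cast; omega]
    rw [resid_add_self]
  have hinj : ∀ i, 1 ≤ i → i ≤ k - 1 → ∀ j, 1 ≤ j → j ≤ k - 1 →
      gammaSeq k la i = gammaSeq k la j → i = j := fun i hi1 hi2 j hj1 hj2 =>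
    hdist i (Finset.mem_Icc.mpr ⟨hi1, hi2⟩) j (Finset.mem_Icc.mpr ⟨hj1, hj2⟩)
  have hpd : mu.parts b + 1 + (la.parts a - (mu.parts b + 1)) = la.parts a := by omega
  have hmain := ninv_cycle k (la.parts a - (mu.parts b + 1)) (gammaSeq k la)
    (gammaSeq k mu) (mu.parts b + 1) (by omega) (by omega)
    (fun j h1 h2 h3 => hbeta_off j h1 h2 (by omega))
    (fun j h1 h2 => hbeta_shift j h1 (by omega))
    (by rw [hpd]; exact hbeta_last) hinj
  rw [hheight]
  omega


end Petrie
end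

section
/- Let k ≥ 3, let λ and μ be distinct partitions of m with pet_k(λ) ≠ 0 and pet_k(μ) ≠ 0, and let λ⁺ be a partition with λ⁺_1 < k such that both λ⁺/λ and λ⁺/μ are rim hooks of size n. If k divides n, then (-1)^{ht(λ⁺/λ)} pet_k(λ) = (-1)^{ht(λ⁺/μ)} pet_k(μ). -/
open scoped Classical

namespace Petrie

/-! ### Auxiliary lemmas -/

theorem Partition.ext'_s18 {p q : Partition} (h : p.parts = q.parts) : p = q := by
  cases p; cases q; simpa using h

lemma parts_eq_zero_iff (l : Partition) (i : ℕ) : l.parts i = 0 ↔ length l ≤ i := by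
  constructor
  · intro h; exact Nat.sInf_le h
  · intro h
    have hne : {i | l.parts i = 0}.Nonempty := by
      obtain ⟨N, hN⟩ := l.fin_supp; exact ⟨N, hN N le_rfl⟩
    have hmem : l.parts (length l) = 0 := Nat.sInf_mem hne
    exact Nat.le_zero.mp (hmem ▸ l.antitone h)

lemma parts_pos_iff (l : Partition) (i : ℕ) : 0 < l.parts i ↔ i < length l := by
  rw [Nat.pos_iff_ne_zero, ← not_le, not_iff_not]
  exact parts_eq_zero_iff l i

/-- The `N × N` version of the Petrie matrix. -/
noncomputable def MatN (k : ℕ) (l : Partition) (N : ℕ) : Matrix (Fin N) (Fin N) ℤ :=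
  Matrix.of fun i j =>
    if ((i : ℤ) - l.parts i ≤ (j : ℤ) ∧ (j : ℤ) < (i : ℤ) - l.parts i + k) then 1 else 0

lemma pet_eq_matN (k : ℕ) (l : Partition) : pet k l = (MatN k l (length l)).det := by
  unfold pet MatN
  congr 1
  ext i j
  simp only [Matrix.of_apply]
  refine if_congr ?_ rfl rfl
  constructor <;> intro h <;> constructor <;> omega

lemma matN_succ (k : ℕ) (hk : 1 ≤ k) (l : Partition) (N : ℕ) (h : length l ≤ N) :
    (MatN k l (N + 1)).det = (MatN k l N).det := by
  have h0 : l.parts N = 0 := (parts_eq_zero_iff l N).mpr h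
  rw [Matrix.det_succ_row _ (Fin.last N)]
  rw [Finset.sum_eq_single (Fin.last N)]
  · have hlast : (MatN k l (N + 1)) (Fin.last N) (Fin.last N) = 1 := by
      simp only [MatN, Matrix.of_apply, Fin.val_last, h0]
      rw [if_pos]
      constructor
      · push_cast; omega
      · push_cast; omega
    rw [hlast]
    have hsub : (MatN k l (N + 1)).submatrix (Fin.last N).succAbove
        (Fin.last N).succAbove = MatN k l N := by
      ext i j
      simp only [Matrix.submatrix_apply, Fin.succAbove_last, MatN, Matrix.of_apply,
        Fin.coe_castSucc]
    rw [hsub, Fin.val_last]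
    have : (-1 : ℤ) ^ (N + N) = 1 := Even.neg_one_pow ⟨N, rfl⟩
    rw [this, one_mul, one_mul]
  · intro j _ hj
    have hj0 : (MatN k l (N + 1)) (Fin.last N) j = 0 := by
      simp only [MatN, Matrix.of_apply, Fin.val_last, h0]
      rw [if_neg]
      intro ⟨h1, _⟩
      have hjN : (j : ℕ) < N := Fin.val_lt_last hj
      push_cast at h1
      omega
    rw [hj0, mul_zero, zero_mul]
  · simp

lemma pet_eq_matN_of_le (k : ℕ) (hk : 1 ≤ k) (l : Partition) (N : ℕ) (h : length l ≤ N) :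
    pet k l = (MatN k l N).det := by
  induction N, h using Nat.le_induction with
  | base => exact pet_eq_matN k l
  | succ N hN ih => rw [matN_succ k hk l N hN]; exact ih

/-- Indicator row vector of the interval `[a, a+k)`. -/
noncomputable def vrow (k N : ℕ) (a : ℤ) : Fin N → ℤ :=
  fun j => if (a ≤ (j : ℤ) ∧ (j : ℤ) < a + k) then 1 else 0

lemma runner_sum (k N : ℕ) (hk : 1 ≤ k) (c : ℤ) (hc0 : 0 ≤ c) (hck : c < k) (j : Fin N) :
    ∑ a ∈ (Finset.Ioo (-(k : ℤ)) (N : ℤ)).filter (fun a => a % k = c), vrow k N a j = 1 := by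
  have hkpos : (0 : ℤ) < k := by exact_mod_cast hk
  set a0 : ℤ := (j : ℤ) - ((j : ℤ) - c) % k with ha0
  have he0 : 0 ≤ ((j : ℤ) - c) % k := Int.emod_nonneg _ (by omega)
  have he1 : ((j : ℤ) - c) % k < k := Int.emod_lt_of_pos _ hkpos
  have ha0jk : (j : ℤ) - k < a0 := by omega
  have ha0j : a0 ≤ (j : ℤ) := by omega
  have hjN : (j : ℤ) < N := by exact_mod_cast j.isLt
  have hj0 : (0 : ℤ) ≤ (j : ℤ) := by positivity
  have ha0res : a0 % k = c := by
    have : a0 = c + k * (((j : ℤ) - c) / k) := by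
      have := Int.mul_ediv_add_emod ((j : ℤ) - c) k
      omega
    rw [this, Int.add_mul_emod_self_left, Int.emod_eq_of_lt hc0 hck]
  rw [Finset.sum_eq_single a0]
  · unfold vrow; rw [if_pos ⟨ha0j, by omega⟩]
  · intro b hb hba
    obtain ⟨hbW, hbres⟩ := Finset.mem_filter.mp hb
    unfold vrow
    rw [if_neg]
    intro ⟨hb1, hb2⟩
    apply hba
    have hdvd : (k : ℤ) ∣ b - a0 := by
      apply Int.dvd_of_emod_eq_zero
      rw [Int.sub_emod, hbres, ha0res]
      simp
    have : b - a0 = 0 := Int.eq_zero_of_abs_lt_dvd hdvd (by rw [abs_lt]; omega)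
    omega
  · intro ha0
    exfalso
    apply ha0
    rw [Finset.mem_filter, Finset.mem_Ioo]
    exact ⟨⟨by omega, by omega⟩, ha0res⟩

lemma det_updateRow_finset_sum {α : Type*} {N : ℕ} (M : Matrix (Fin N) (Fin N) ℤ) (p : Fin N)
    (S : Finset α) (f : α → (Fin N → ℤ)) :
    (M.updateRow p (∑ a ∈ S, f a)).det = ∑ a ∈ S, (M.updateRow p (f a)).det := by
  classical
  induction S using Finset.induction_on with
  | empty =>
    rw [Finset.sum_empty, Finset.sum_empty]
    exact Matrix.det_eq_zero_of_row_eq_zero p (fun j => by simp)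
  | @insert a s h ih =>
    rw [Finset.sum_insert h, Matrix.det_updateRow_add, ih, Finset.sum_insert h]

lemma det_shift_eq_neg (k N n : ℕ) (hk : 1 ≤ k) (hd : k ∣ n) (hn : n ≠ 0)
    (aval : ℕ → ℤ) (hmono : StrictMono aval)
    (hlb : ∀ i : ℕ, -(k : ℤ) < aval i) (hub : ∀ i : ℕ, i < N → aval i ≤ (i : ℤ))
    (s : ℕ) (hs : s < N) (g : ℤ) (hg : g = aval s + n) (hgN : g < (N : ℤ))
    (B : Matrix (Fin N) (Fin N) ℤ)
    (hB : B = Matrix.updateRow (Matrix.of fun i j : Fin N => vrow k N (aval i) j)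
      ⟨s, hs⟩ (vrow k N g))
    (hdet : B.det ≠ 0) :
    B.det = - (Matrix.of fun i j : Fin N => vrow k N (aval i) j).det := by
  classical
  have hkpos : (0 : ℤ) < k := by exact_mod_cast hk
  have hnpos : (0 : ℤ) < n := by exact_mod_cast Nat.pos_of_ne_zero hn
  set Mlp : Matrix (Fin N) (Fin N) ℤ := Matrix.of fun i j : Fin N => vrow k N (aval i) j with hMlp
  set s' : Fin N := ⟨s, hs⟩ with hs'
  set rowVal : Fin N → ℤ := fun i => if i = s' then g else aval (i : ℕ) with hrowVal
  have hrow : ∀ i : Fin N, B i = vrow k N (rowVal i) := by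
    intro i
    by_cases hi : i = s'
    · subst hi; simp [hB, rowVal, Matrix.updateRow_self]
    · simp [hB, rowVal, Matrix.updateRow_ne hi, if_neg hi, Mlp]
      rfl
  have hMrow : ∀ i : Fin N, Mlp i = vrow k N (aval (i : ℕ)) := fun i => rfl
  have hgas : g ≠ aval s := by omega
  have hgai : ∀ i : Fin N, g ≠ aval (i : ℕ) := by
    intro i hgi
    by_cases hi : i = s'
    · subst hi; exact hgas hgi
    · apply hdet
      refine Matrix.det_zero_of_row_eq (Ne.symm hi) ?_
      rw [hrow, hrow]
      simp only [rowVal, if_pos rfl, if_neg hi, ← hgi]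
  have hinj : Function.Injective rowVal := by
    intro i i' hii
    by_cases hi : i = s' <;> by_cases hi' : i' = s'
    · rw [hi, hi']
    · exfalso; apply hgai i'
      simp only [rowVal, if_pos hi, if_neg hi'] at hii
      exact hii
    · exfalso; apply hgai i
      simp only [rowVal, if_neg hi, if_pos hi'] at hii
      exact hii.symm
    · simp only [rowVal, if_neg hi, if_neg hi'] at hii
      exact Fin.ext (hmono.injective hii)
  set Wf : Finset ℤ := Finset.Ioo (-(k : ℤ)) (N : ℤ) with hWf
  have hvalWf : ∀ i : Fin N, rowVal i ∈ Wf := by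
    intro i
    rw [Finset.mem_Ioo]
    by_cases hi : i = s'
    · simp only [rowVal, if_pos hi]
      have := hlb s
      omega
    · simp only [rowVal, if_neg hi]
      have h1 := hlb (i : ℕ)
      have h2 := hub (i : ℕ) i.isLt
      have h3 : ((i : ℕ) : ℤ) < N := by exact_mod_cast i.isLt
      omega
  set imgR : Finset ℤ := Finset.image rowVal Finset.univ with himgR
  have himgR_sub : imgR ⊆ Wf := by
    intro a ha
    obtain ⟨i, _, rfl⟩ := Finset.mem_image.mp ha
    exact hvalWf i
  have hcard_img : imgR.card = N := by
    rw [himgR, Finset.card_image_of_injective _ hinj, Finset.card_univ, Fintype.card_fin]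
  set Cpl : Finset ℤ := Wf \ imgR with hCpl
  have hcard_Wf : Wf.card = N + k - 1 := by
    rw [hWf, Int.card_Ioo]; omega
  have hcard_Cpl : Cpl.card = k - 1 := by
    rw [hCpl, Finset.card_sdiff_of_subset himgR_sub, hcard_img, hcard_Wf]; omega
  set resS : Finset ℤ := Cpl.image (· % (k : ℤ)) with hresS
  set allRes : Finset ℤ := (Finset.range k).image (Nat.cast : ℕ → ℤ) with hallRes
  have hcard_allRes : allRes.card = k := by
    rw [hallRes, Finset.card_image_of_injective _ Nat.cast_injective, Finset.card_range]
  have hresS_sub : resS ⊆ allRes := by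
    intro c hc
    obtain ⟨a, _, rfl⟩ := Finset.mem_image.mp hc
    have h0 : 0 ≤ a % k := Int.emod_nonneg _ (by omega)
    have h1 : a % k < k := Int.emod_lt_of_pos _ hkpos
    rw [hallRes, Finset.mem_image]
    exact ⟨(a % k).toNat, Finset.mem_range.mpr (by omega), by omega⟩
  have hallRes_mem : ∀ c ∈ allRes, 0 ≤ c ∧ c < k := by
    intro c hc
    obtain ⟨m, hm, rfl⟩ := Finset.mem_image.mp hc
    have := Finset.mem_range.mp hm
    constructor <;> [positivity; exact_mod_cast this]
  -- row sums over residue-free runners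
  set J : ℤ → Finset (Fin N) := fun c => Finset.univ.filter (fun i => rowVal i % k = c) with hJ
  have hJfree : ∀ c ∈ allRes, c ∉ resS → ∀ j : Fin N, ∑ i ∈ J c, B i j = 1 := by
    intro c hc hcfree j
    obtain ⟨hc0, hck⟩ := hallRes_mem c hc
    have himg : (J c).image rowVal = Wf.filter (fun a => a % k = c) := by
      ext a
      rw [Finset.mem_image, Finset.mem_filter]
      constructor
      · rintro ⟨i, hi, rfl⟩
        exact ⟨hvalWf i, (Finset.mem_filter.mp hi).2⟩
      · rintro ⟨haW, hares⟩
        have haimg : a ∈ imgR := by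
          by_contra hcon
          exact hcfree (Finset.mem_image.mpr ⟨a, Finset.mem_sdiff.mpr ⟨haW, hcon⟩, hares⟩)
        obtain ⟨i, _, rfl⟩ := Finset.mem_image.mp haimg
        exact ⟨i, Finset.mem_filter.mpr ⟨Finset.mem_univ i, hares⟩, rfl⟩
    calc ∑ i ∈ J c, B i j = ∑ a ∈ (J c).image rowVal, vrow k N a j := by
          rw [Finset.sum_image (fun x _ y _ h => hinj h)]
          exact Finset.sum_congr rfl (fun i _ => by rw [hrow])
      _ = 1 := by rw [himg]; exact runner_sum k N hk c hc0 hck j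
  have hNpos : 0 < N := lt_of_le_of_lt (Nat.zero_le s) hs
  -- distinct residues in the complement
  have hdistinct : ∀ x ∈ Cpl, ∀ y ∈ Cpl, x ≠ y → x % k = y % k → False := by
    intro x hx y hy hxy hres
    have hk2 : 2 ≤ k := by
      have : 0 < Cpl.card := Finset.card_pos.mpr ⟨x, hx⟩
      omega
    have hres_sub : resS ⊆ (Cpl.erase x).image (· % (k : ℤ)) := by
      intro c hc
      obtain ⟨a, ha, rfl⟩ := Finset.mem_image.mp hc
      by_cases hax : a = x
      · subst hax
        exact Finset.mem_image.mpr ⟨y, Finset.mem_erase.mpr ⟨Ne.symm hxy, hy⟩, hres.symm⟩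
      · exact Finset.mem_image.mpr ⟨a, Finset.mem_erase.mpr ⟨hax, ha⟩, rfl⟩
    have hcard_resS : resS.card ≤ k - 2 := by
      calc resS.card ≤ ((Cpl.erase x).image (· % (k : ℤ))).card := Finset.card_le_card hres_sub
        _ ≤ (Cpl.erase x).card := Finset.card_image_le
        _ = k - 2 := by rw [Finset.card_erase_of_mem hx, hcard_Cpl]; omega
    have htwo : 1 < (allRes \ resS).card := by
      have := Finset.le_card_sdiff resS allRes
      omega
    obtain ⟨c₀, hc₀, c₁, hc₁, hc01⟩ := Finset.one_lt_card.mp htwo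
    obtain ⟨hc₀R, hc₀free⟩ := Finset.mem_sdiff.mp hc₀
    obtain ⟨hc₁R, hc₁free⟩ := Finset.mem_sdiff.mp hc₁
    have hJ0 : ∀ j : Fin N, ∑ i ∈ J c₀, B i j = 1 := hJfree c₀ hc₀R hc₀free
    have hJ1 : ∀ j : Fin N, ∑ i ∈ J c₁, B i j = 1 := hJfree c₁ hc₁R hc₁free
    have hJne : (J c₀).Nonempty := by
      rw [Finset.nonempty_iff_ne_empty]
      intro hcon
      have := hJ0 ⟨0, hNpos⟩
      rw [hcon, Finset.sum_empty] at this
      exact zero_ne_one this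
    obtain ⟨i₀, hi₀⟩ := hJne
    have hdisj : ∀ i ∈ J c₁, i ≠ i₀ := by
      intro i hi hii
      subst hii
      have h0 : rowVal i % k = c₀ := (Finset.mem_filter.mp hi₀).2
      have h1 : rowVal i % k = c₁ := (Finset.mem_filter.mp hi).2
      exact hc01 (h0 ▸ h1 ▸ rfl)
    have hrel : B i₀ = (∑ i ∈ J c₁, B i) + (-1 : ℤ) • (∑ i ∈ (J c₀).erase i₀, B i) := by
      funext j
      have h0 := hJ0 j
      have h1 := hJ1 j
      rw [← Finset.add_sum_erase _ _ hi₀] at h0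
      simp only [Pi.add_apply, Pi.smul_apply, Finset.sum_apply (g := fun i => B i), smul_eq_mul]
      omega
    apply hdet
    calc B.det = (B.updateRow i₀ (B i₀)).det := by rw [Matrix.updateRow_eq_self]
      _ = (B.updateRow i₀ ((∑ i ∈ J c₁, B i) + (-1 : ℤ) • (∑ i ∈ (J c₀).erase i₀, B i))).det := by
          rw [← hrel]
      _ = (B.updateRow i₀ (∑ i ∈ J c₁, B i)).det
          + (-1 : ℤ) * (B.updateRow i₀ (∑ i ∈ (J c₀).erase i₀, B i)).det := by
          rw [Matrix.det_updateRow_add, Matrix.det_updateRow_smul]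
      _ = 0 := by
          rw [det_updateRow_finset_sum (f := fun i => B i), det_updateRow_finset_sum (f := fun i => B i)]
          rw [Finset.sum_eq_zero, Finset.sum_eq_zero]
          · ring
          · intro i hi
            exact Matrix.det_updateRow_eq_zero (Finset.ne_of_mem_erase hi)
          · intro i hi
            exact Matrix.det_updateRow_eq_zero (hdisj i hi)
  -- residue of g
  have hgres : g % k = aval s % k := by
    obtain ⟨q, rfl⟩ := hd
    rw [hg]
    push_cast
    simp [Int.add_mul_emod_self_left]
  have havs_not_img : aval s ∉ imgR := by
    intro hmem
    obtain ⟨i, _, hi⟩ := Finset.mem_image.mp hmem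
    by_cases his : i = s'
    · subst his; simp only [rowVal, if_pos rfl] at hi; exact hgas hi
    · simp only [rowVal, if_neg his] at hi
      exact his (Fin.ext (hmono.injective hi))
  have havsWf : aval s ∈ Wf := by
    rw [Finset.mem_Ioo]
    refine ⟨hlb s, ?_⟩
    have := hub s hs
    have : ((s : ℕ) : ℤ) < N := by exact_mod_cast hs
    omega
  have havsCpl : aval s ∈ Cpl := Finset.mem_sdiff.mpr ⟨havsWf, havs_not_img⟩
  -- a free residue c₀
  have hcard_resS : resS.card ≤ k - 1 := by
    calc resS.card ≤ Cpl.card := Finset.card_image_le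
      _ = k - 1 := hcard_Cpl
  have hfree : (allRes \ resS).Nonempty := by
    rw [← Finset.card_pos]
    have := Finset.le_card_sdiff resS allRes
    omega
  obtain ⟨c₀, hc₀⟩ := hfree
  obtain ⟨hc₀R, hc₀free⟩ := Finset.mem_sdiff.mp hc₀
  have hc₀g : c₀ ≠ g % k := by
    intro hcon
    apply hc₀free
    rw [hresS]
    exact Finset.mem_image.mpr ⟨aval s, havsCpl, by rw [← hgres, hcon]⟩
  have hJ0 : ∀ j : Fin N, ∑ i ∈ J c₀, B i j = 1 := hJfree c₀ hc₀R hc₀free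
  have hs'J : s' ∉ J c₀ := by
    intro hcon
    have := (Finset.mem_filter.mp hcon).2
    simp only [rowVal, if_pos rfl] at this
    exact hc₀g this.symm
  have hBM : ∀ i ∈ J c₀, B i = Mlp i := by
    intro i hi
    have his : i ≠ s' := fun h => hs'J (h ▸ hi)
    rw [hrow, hMrow]
    simp only [rowVal, if_neg his]
  -- the runner of g
  set runr : Finset ℤ := Wf.filter (fun a => a % k = g % k) with hrunr
  have hg0 : 0 ≤ g % k := Int.emod_nonneg _ (by omega)
  have hgk : g % k < k := Int.emod_lt_of_pos _ hkpos
  have hrun_sum : ∀ j : Fin N, ∑ a ∈ runr, vrow k N a j = 1 :=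
    fun j => runner_sum k N hk (g % k) hg0 hgk j
  have hgWf : g ∈ Wf := by
    rw [Finset.mem_Ioo]
    have := hlb s
    omega
  have hgrun : g ∈ runr := Finset.mem_filter.mpr ⟨hgWf, rfl⟩
  have havrun : aval s ∈ (runr.erase g) :=
    Finset.mem_erase.mpr ⟨Ne.symm hgas, Finset.mem_filter.mpr ⟨havsWf, hgres.symm⟩⟩
  have hvg : vrow k N g = (fun _ => (1 : ℤ)) + (-1 : ℤ) • (∑ a ∈ runr.erase g, vrow k N a) := by
    funext j
    have h1 := hrun_sum j
    rw [← Finset.add_sum_erase _ _ hgrun] at h1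
    simp only [Pi.add_apply, Pi.smul_apply, Finset.sum_apply, smul_eq_mul]
    omega
  have hone : (fun _ : Fin N => (1 : ℤ)) = ∑ i ∈ J c₀, Mlp i := by
    funext j
    have := hJ0 j
    rw [Finset.sum_apply (g := fun i => Mlp i)]
    rw [← Finset.sum_congr rfl (fun i hi => by rw [hBM i hi])] at this
    exact this.symm
  have hterm1 : (Mlp.updateRow s' (fun _ => (1 : ℤ))).det = 0 := by
    rw [hone, det_updateRow_finset_sum (f := fun i => Mlp i)]
    apply Finset.sum_eq_zero
    intro i hi
    have his : i ≠ s' := fun h => hs'J (h ▸ hi)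
    exact Matrix.det_updateRow_eq_zero his
  have hterm2 : ∑ a ∈ runr.erase g, (Mlp.updateRow s' (vrow k N a)).det = Mlp.det := by
    rw [Finset.sum_eq_single (aval s)]
    · have : vrow k N (aval s) = Mlp s' := (hMrow s').symm
      rw [this, Matrix.updateRow_eq_self]
    · intro a ha hane
      obtain ⟨hag, harun⟩ := Finset.mem_erase.mp ha
      obtain ⟨haWf, hares⟩ := Finset.mem_filter.mp harun
      have haimg : a ∈ imgR := by
        by_contra hcon
        exact hdistinct a (Finset.mem_sdiff.mpr ⟨haWf, hcon⟩) (aval s) havsCpl hane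
          (by rw [hares, hgres])
      obtain ⟨i, _, hi⟩ := Finset.mem_image.mp haimg
      have his : i ≠ s' := by
        intro h
        rw [h] at hi
        simp only [rowVal, if_pos rfl] at hi
        exact hag hi.symm
      have hai : a = aval (i : ℕ) := by
        rw [← hi]; simp only [rowVal, if_neg his]
      rw [hai, show vrow k N (aval (i : ℕ)) = Mlp i from (hMrow i).symm]
      exact Matrix.det_updateRow_eq_zero his
    · intro hcon
      exact absurd havrun hcon
  calc B.det = (Mlp.updateRow s' (vrow k N g)).det := by rw [hB]
    _ = (Mlp.updateRow s' ((fun _ => (1 : ℤ))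
          + (-1 : ℤ) • (∑ a ∈ runr.erase g, vrow k N a))).det := by rw [← hvg]
    _ = (Mlp.updateRow s' (fun _ => (1 : ℤ))).det
          + (-1 : ℤ) * (Mlp.updateRow s' (∑ a ∈ runr.erase g, vrow k N a)).det := by
        rw [Matrix.det_updateRow_add, Matrix.det_updateRow_smul]
    _ = - Mlp.det := by
        rw [hterm1, det_updateRow_finset_sum, hterm2]
        ring

lemma rimhook_struct_s18 {lp la : Partition} {n : ℕ} (h : IsRimHook lp la n) (hn : n ≠ 0) :
    ∃ s t : ℕ, s ≤ t ∧ t < length lp ∧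
      (∀ i, ¬(s ≤ i ∧ i ≤ t) → la.parts i = lp.parts i) ∧
      (∀ i, s ≤ i → i < t → la.parts i + 1 = lp.parts (i + 1)) ∧
      ((t : ℤ) - la.parts t = (s : ℤ) - lp.parts s + n) ∧
      {i | la.parts i < lp.parts i} = Set.Icc s t := by
  obtain ⟨hsub, hsum, hconn, hsq⟩ := h
  have cross : ∀ p : ℕ, ∀ c ∈ cells lp la, ∀ d ∈ cells lp la, c.1 ≤ p → p < d.1 →
      ∃ j, la.parts p ≤ j ∧ j < lp.parts p ∧ la.parts (p+1) ≤ j ∧ j < lp.parts (p+1) := by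
    intro p c hc d hd hcp hpd
    have hpath := hconn c hc d hd
    clear hc
    revert hcp
    induction hpath using Relation.ReflTransGen.head_induction_on with
    | refl =>
      intro hdp
      exact absurd hpd (by omega)
    | head hstep htail ih =>
      rename_i a b
      intro hap
      obtain ⟨ha, hb, hadj⟩ := hstep
      by_cases hbp : b.1 ≤ p
      · exact ih hbp
      · rcases hadj with ⟨h1, _⟩ | ⟨h2, h3 | h3⟩
        · exact absurd (by omega : b.1 ≤ p) hbp
        · have hap' : a.1 = p := by omega
          obtain ⟨ha1, ha2⟩ := ha
          obtain ⟨hb1, hb2⟩ := hb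
          refine ⟨a.2, ?_, ?_, ?_, ?_⟩
          · rw [← hap']; exact ha1
          · rw [← hap']; exact ha2
          · rw [show p + 1 = b.1 by omega, h2]; exact hb1
          · rw [show p + 1 = b.1 by omega, h2]; exact hb2
        · exact absurd (by omega : b.1 ≤ p) hbp
  have hex : ∃ i, la.parts i < lp.parts i := by
    by_contra hcon
    push_neg at hcon
    apply hn
    rw [← hsum]
    have hz : ∀ i, lp.parts i - la.parts i = 0 := fun i => by
      have h1 := hsub i; have h2 := hcon i; omega
    simp only [hz]
    exact finsum_zero
  have hbd : ∀ i, la.parts i < lp.parts i → i < length lp := by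
    intro i hi
    rw [← parts_pos_iff]
    omega
  classical
  set F : Finset ℕ := (Finset.range (length lp)).filter (fun i => la.parts i < lp.parts i)
    with hF
  have hFmem : ∀ i, i ∈ F ↔ la.parts i < lp.parts i := by
    intro i; rw [hF, Finset.mem_filter, Finset.mem_range]
    exact ⟨fun h => h.2, fun h => ⟨hbd i h, h⟩⟩
  obtain ⟨i₀, hi₀⟩ := hex
  have hFne : F.Nonempty := ⟨i₀, (hFmem i₀).mpr hi₀⟩
  set s := F.min' hFne with hsdef
  set t := F.max' hFne with htdef
  have hsF : s ∈ F := F.min'_mem hFne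
  have htF : t ∈ F := F.max'_mem hFne
  have hst : s ≤ t := F.min'_le t htF
  have htL : t < length lp := Finset.mem_range.mp (Finset.mem_filter.mp htF).1
  have hsR : la.parts s < lp.parts s := (hFmem s).mp hsF
  have htR : la.parts t < lp.parts t := (hFmem t).mp htF
  have hcs : (s, la.parts s) ∈ cells lp la := ⟨le_rfl, hsR⟩
  have hct : (t, la.parts t) ∈ cells lp la := ⟨le_rfl, htR⟩
  have hmid : ∀ i, s ≤ i → i ≤ t → la.parts i < lp.parts i := by
    intro i hsi hit
    by_cases hit' : i = t
    · exact hit' ▸ htR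
    · obtain ⟨j, hj1, hj2, _, _⟩ :=
        cross i (s, la.parts s) hcs (t, la.parts t) hct hsi (by omega)
      omega
  have hRIcc : {i | la.parts i < lp.parts i} = Set.Icc s t := by
    ext i
    simp only [Set.mem_setOf_eq, Set.mem_Icc]
    constructor
    · intro hi
      have hiF : i ∈ F := (hFmem i).mpr hi
      exact ⟨F.min'_le i hiF, F.le_max' i hiF⟩
    · intro ⟨h1, h2⟩; exact hmid i h1 h2
  have hout : ∀ i, ¬(s ≤ i ∧ i ≤ t) → la.parts i = lp.parts i := by
    intro i hi
    have h1 := hsub i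
    have h2 : ¬ la.parts i < lp.parts i := by
      intro hcon
      have hiF : i ∈ F := (hFmem i).mpr hcon
      exact hi ⟨F.min'_le i hiF, F.le_max' i hiF⟩
    omega
  have hstair : ∀ i, s ≤ i → i < t → la.parts i + 1 = lp.parts (i + 1) := by
    intro i hsi hit
    obtain ⟨j, hj1, hj2, hj3, hj4⟩ :=
      cross i (s, la.parts s) hcs (t, la.parts t) hct hsi hit
    by_cases hupper : la.parts i + 2 ≤ lp.parts (i + 1)
    · exfalso
      apply hsq
      have hanti1 : lp.parts (i+1) ≤ lp.parts i := lp.antitone (by omega)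
      have hanti2 : la.parts (i+1) ≤ la.parts i := la.antitone (by omega)
      have hmem : ∀ a b : ℕ, la.parts a ≤ b → b < lp.parts a → (a, b) ∈ cells lp la :=
        fun a b h1 h2 => ⟨h1, h2⟩
      exact ⟨i, la.parts i, hmem _ _ le_rfl (by omega), hmem _ _ (by omega) (by omega),
        hmem _ _ (by omega) (by omega), hmem _ _ (by omega) (by omega)⟩
    · omega
  have hIccsub : Finset.Icc s t ⊆ Finset.range (length lp) := by
    intro i hi
    rw [Finset.mem_Icc] at hi
    rw [Finset.mem_range]
    omega
  have hsum1 : ∑ i ∈ Finset.range (length lp), (lp.parts i - la.parts i) = n := by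
    rw [← hsum]
    refine (finsum_eq_sum_of_support_subset _ ?_).symm
    intro i hi
    simp only [Function.mem_support] at hi
    simp only [Finset.coe_range, Set.mem_Iio]
    have h1 := hsub i
    have h2 : 0 < lp.parts i := by omega
    exact (parts_pos_iff lp i).mp h2
  have hsum2 : ∑ i ∈ Finset.Icc s t, (lp.parts i - la.parts i) = n := by
    rw [← hsum1]
    refine Finset.sum_subset hIccsub ?_
    intro i _ hi
    rw [Finset.mem_Icc] at hi
    rw [hout i hi]
    omega
  have hsum3 : ∑ i ∈ Finset.Icc s t, ((lp.parts i : ℤ) - la.parts i) = n := by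
    rw [show ((n : ℤ)) = ((∑ i ∈ Finset.Icc s t, (lp.parts i - la.parts i) : ℕ) : ℤ) by
      rw [hsum2]]
    rw [Nat.cast_sum]
    refine Finset.sum_congr rfl ?_
    intro i _
    have := hsub i
    omega
  have htel : ∀ d : ℕ, s + d ≤ t →
      ∑ i ∈ Finset.Icc s (s + d), ((lp.parts i : ℤ) - la.parts i)
        = (lp.parts s : ℤ) - la.parts (s + d) + d := by
    intro d
    induction d with
    | zero => intro _; simp
    | succ d ih =>
      intro hd
      rw [show s + (d+1) = (s+d) + 1 by omega,
        Finset.sum_Icc_succ_top (by omega : s ≤ s + d + 1)]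
      rw [show s + d + 1 = s + (d + 1) by omega] at *
      rw [ih (by omega)]
      have hδ := hstair (s+d) (by omega) (by omega)
      rw [show s + d + 1 = s + (d + 1) by omega] at hδ
      push_cast
      omega
  have hA3 : (t : ℤ) - la.parts t = (s : ℤ) - lp.parts s + n := by
    have h1 := htel (t - s) (by omega)
    rw [show s + (t - s) = t by omega] at h1
    rw [h1] at hsum3
    push_cast at hsum3 ⊢
    omega
  exact ⟨s, t, hst, htL, hout, hstair, hA3, hRIcc⟩

lemma key (k n : ℕ) (hk : 1 ≤ k) (lp la : Partition) (h1 : lp.parts 0 < k)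
    (hr : IsRimHook lp la n) (hd : k ∣ n) (hn : n ≠ 0) (hpa : pet k la ≠ 0) :
    (-1 : ℤ) ^ height lp la * pet k la = - (MatN k lp (length lp)).det := by
  classical
  obtain ⟨s, t, hst, htL, hout, hstair, hA3, hRIcc⟩ := rimhook_struct_s18 hr hn
  set N := length lp with hN
  have hsub : ∀ i, la.parts i ≤ lp.parts i := hr.1
  have hlaN : length la ≤ N := by
    rw [← parts_eq_zero_iff]
    have h0 : lp.parts N = 0 := (parts_eq_zero_iff lp N).mpr le_rfl
    have := hsub N
    omega
  have hpet : pet k la = (MatN k la N).det := pet_eq_matN_of_le k hk la N hlaN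
  set aval : ℕ → ℤ := fun i => (i : ℤ) - lp.parts i with haval
  have hmono : StrictMono aval := by
    apply strictMono_nat_of_lt_succ
    intro i
    have := lp.antitone (show i ≤ i + 1 by omega)
    simp only [aval]
    push_cast
    omega
  have hlb : ∀ i : ℕ, -(k : ℤ) < aval i := by
    intro i
    have := lp.antitone (Nat.zero_le i)
    simp only [aval]
    push_cast
    omega
  have hub : ∀ i : ℕ, i < N → aval i ≤ (i : ℤ) := by
    intro i _
    simp only [aval]
    omega
  have hsN : s < N := by omega
  have htN : t < N := htL
  set g : ℤ := aval s + n with hg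
  have hgt : g = (t : ℤ) - la.parts t := by
    have h' : aval s = (s : ℤ) - lp.parts s := rfl
    rw [hg, h']
    omega
  have hgN : g < (N : ℤ) := by
    rw [hgt]
    have : (t : ℤ) < (N : ℤ) := by exact_mod_cast htN
    omega
  set Bmat : ℕ → Matrix (Fin N) (Fin N) ℤ := fun r => Matrix.of fun i j =>
    vrow k N (if s ≤ (i : ℕ) ∧ (i : ℕ) < r then aval ((i : ℕ) + 1)
      else if (i : ℕ) = r then g else aval (i : ℕ)) j with hBmat
  have hC1 : MatN k la N = Bmat t := by
    ext i j
    simp only [hBmat, MatN, Matrix.of_apply, vrow]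
    have harg : ((i : ℕ) : ℤ) - la.parts (i : ℕ)
        = (if s ≤ (i : ℕ) ∧ (i : ℕ) < t then aval ((i : ℕ) + 1)
          else if (i : ℕ) = t then g else aval (i : ℕ)) := by
      by_cases hc : s ≤ (i : ℕ) ∧ (i : ℕ) < t
      · rw [if_pos hc]
        have := hstair (i : ℕ) hc.1 hc.2
        simp only [aval]
        push_cast
        omega
      · rw [if_neg hc]
        by_cases hc2 : (i : ℕ) = t
        · rw [if_pos hc2, hc2, hgt]
        · rw [if_neg hc2]
          have := hout (i : ℕ) (by omega)
          simp only [aval]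
          omega
    rw [harg]
  have hswap : ∀ r, s ≤ r → r < t → (Bmat (r + 1)).det = - (Bmat r).det := by
    intro r hsr hrt
    have hrN : r < N := by omega
    have hr1N : r + 1 < N := by omega
    set rf : Fin N := ⟨r, hrN⟩ with hrf
    set rf1 : Fin N := ⟨r + 1, hr1N⟩ with hrf1
    have hne : rf ≠ rf1 := by
      simp only [hrf, hrf1, Ne, Fin.mk.injEq]
      omega
    have heq : Bmat (r + 1) = (Bmat r).submatrix (Equiv.swap rf rf1) id := by
      ext i j
      rw [Matrix.submatrix_apply, id_eq]
      by_cases hi : i = rf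
      · subst hi
        rw [Equiv.swap_apply_left]
        simp only [hBmat, Matrix.of_apply, hrf, hrf1]
        rw [if_pos ⟨hsr, by omega⟩, if_neg (by omega), if_neg (by omega)]
      · by_cases hi' : i = rf1
        · subst hi'
          rw [Equiv.swap_apply_right]
          simp only [hBmat, Matrix.of_apply, hrf, hrf1]
          simp only [lt_self_iff_false, and_false, if_false, if_true, Nat.lt_irrefl]
        · rw [Equiv.swap_apply_of_ne_of_ne hi hi']
          simp only [hBmat, Matrix.of_apply]
          have hir : (i : ℕ) ≠ r := by
            intro hcon; exact hi (Fin.ext hcon)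
          have hir1 : (i : ℕ) ≠ r + 1 := by
            intro hcon; exact hi' (Fin.ext hcon)
          by_cases hc : s ≤ (i : ℕ) ∧ (i : ℕ) < r
          · rw [if_pos ⟨hc.1, by omega⟩, if_pos hc]
          · by_cases hc2 : s ≤ (i : ℕ) ∧ (i : ℕ) < r + 1
            · exact absurd (by omega : (i : ℕ) = r) hir
            · rw [if_neg hc2, if_neg hc, if_neg hir1, if_neg hir]
    rw [heq, Matrix.det_permute, Equiv.Perm.sign_swap hne]
    simp
  have hiter : ∀ d, s + d ≤ t → (Bmat (s + d)).det = (-1 : ℤ) ^ d * (Bmat s).det := by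
    intro d
    induction d with
    | zero => intro _; simp
    | succ d ih =>
      intro hdt
      rw [show s + (d + 1) = (s + d) + 1 by omega, hswap (s + d) (by omega) (by omega),
        ih (by omega), pow_succ]
      ring
  set s' : Fin N := ⟨s, hsN⟩ with hs'
  set Mlp' : Matrix (Fin N) (Fin N) ℤ := Matrix.of fun i j => vrow k N (aval (i : ℕ)) j
    with hMlp'
  set B : Matrix (Fin N) (Fin N) ℤ := Mlp'.updateRow s' (vrow k N g) with hBdef
  have hC4 : Bmat s = B := by
    ext i j
    by_cases hi : i = s'
    · subst hi
      rw [hBdef, Matrix.updateRow_self]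
      simp only [hBmat, Matrix.of_apply, hs']
      rw [if_neg (show ¬(s ≤ s ∧ s < s) by omega)]
      simp
    · rw [hBdef, Matrix.updateRow_ne hi]
      simp only [hBmat, hMlp', Matrix.of_apply]
      have his : (i : ℕ) ≠ s := by
        intro hcon; exact hi (Fin.ext hcon)
      rw [if_neg (by omega), if_neg his]
  have hchain : pet k la = (-1 : ℤ) ^ (t - s) * B.det := by
    rw [hpet, hC1, show t = s + (t - s) by omega, hiter (t - s) (by omega), hC4,
      show s + (t - s) = t by omega]
  have hdetB : B.det ≠ 0 := by
    intro hcon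
    rw [hchain, hcon, mul_zero] at hpa
    exact hpa rfl
  have hkey := det_shift_eq_neg k N n hk hd hn aval hmono hlb hub s hsN g hg hgN B hBdef hdetB
  have hheight : height lp la = t - s := by
    unfold height
    rw [hRIcc, show Set.Icc s t = ↑(Finset.Icc s t) by rw [Finset.coe_Icc],
      Set.ncard_coe_finset, Nat.card_Icc]
    omega
  have hMlpN : MatN k lp N = Mlp' := by
    ext i j
    simp only [hMlp', MatN, Matrix.of_apply, vrow, aval]
  rw [hheight, hchain, hMlpN, ← hkey, ← mul_assoc, ← pow_add]
  rw [Even.neg_one_pow ⟨t - s, rfl⟩, one_mul]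

/-- for `k ≥ 3`, distinct `λ, μ ⊢ m` with nonzero Petrie
numbers, and `λ⁺` with `λ⁺_1 < k` such that both `λ⁺/λ` and `λ⁺/μ` are rim
hooks of size `n`: if `k ∣ n` then the two signed contributions agree. -/
theorem signed_contributions_agree (k m n : ℕ) (hk : 3 ≤ k) (la mu : Partition)
    (hla : psize la = m) (hmu : psize mu = m) (hne : la ≠ mu)
    (hpa : pet k la ≠ 0) (hpb : pet k mu ≠ 0)
    (lp : Partition) (h1 : lp.parts 0 < k)
    (hr1 : IsRimHook lp la n) (hr2 : IsRimHook lp mu n) (hd : k ∣ n) :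
    (-1 : ℤ) ^ height lp la * pet k la = (-1 : ℤ) ^ height lp mu * pet k mu := by
  by_cases hn : n = 0
  · exfalso
    apply hne
    have hzero : ∀ nu : Partition, IsRimHook lp nu 0 → nu = lp := by
      intro nu hrr
      obtain ⟨hsub, hsum, _, _⟩ := hrr
      apply Partition.ext'_s18
      funext i
      have hsupp : Function.support (fun i => lp.parts i - nu.parts i)
          ⊆ ↑(Finset.range (length lp)) := by
        intro x hx
        simp only [Function.mem_support] at hx
        simp only [Finset.coe_range, Set.mem_Iio]
        have h2 := hsub x
        have h3 : 0 < lp.parts x := by omega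
        exact (parts_pos_iff lp x).mp h3
      have hs2 := finsum_eq_sum_of_support_subset _ hsupp
      rw [hsum] at hs2
      have hall : ∀ x ∈ Finset.range (length lp), lp.parts x - nu.parts x = 0 :=
        Finset.sum_eq_zero_iff.mp hs2.symm
      have h4 := hsub i
      by_cases hi : i < length lp
      · have := hall i (Finset.mem_range.mpr hi)
        omega
      · have h0 : lp.parts i = 0 := (parts_eq_zero_iff lp i).mpr (by omega)
        omega
    rw [hzero la (hn ▸ hr1), hzero mu (hn ▸ hr2)]
  · have hk1 : 1 ≤ k := by omega
    rw [key k n hk1 lp la h1 hr1 hd hn hpa, key k n hk1 lp mu h1 hr2 hd hn hpb]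

end Petrie
end
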